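/- arXiv:1806.00882 — 6 statements merged into one kernel-verified Lean document; each statement's English description precedes it below -/
import Mathlib

section
/- Let G be an MVR chain graph on a finite vertex set V and let Ḡ be an undirected independence graph for G. Then any junction tree constructed from Ḡ (i.e., a junction tree of the cliques of a triangulation of Ḡ) is an m-separation tree for G. -/
namespace MVR

universe u v

/-- A mixed graph with directed (`dir u v` means `u → v`) and bidirected
(`bi u v` means `u ↔ v`) edges between distinct vertices. -/
structure MixedGraph (V : Type u) where
  dir : V → V → Prop
  bi : V → V → Prop
  bi_symm : ∀ ⦃u v : V⦄, bi u v → bi v u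
  dir_irrefl : ∀ v : V, ¬ dir v v
  bi_irrefl : ∀ v : V, ¬ bi v v

namespace MixedGraph

variable {V : Type u}

/-- Two vertices are adjacent if they are joined by a directed or bidirected edge. -/
def Adjacent (G : MixedGraph V) (u v : V) : Prop :=
  G.dir u v ∨ G.dir v u ∨ G.bi u v

/-- `u` is an ancestor of `v`: there is a directed path `u → ⋯ → v`. -/
def IsAncestor (G : MixedGraph V) (u v : V) : Prop :=
  Relation.TransGen G.dir u v

/-- `an(X)`: the set of ancestors of vertices in `X`. -/
def anc (G : MixedGraph V) (X : Set V) : Set V :=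
  {a | ∃ x ∈ X, G.IsAncestor a x}

/-- `An(X) = an(X) ∪ X`. -/
def Anc (G : MixedGraph V) (X : Set V) : Set V :=
  G.anc X ∪ X

/-- The boundary `bd(u)`: vertices `v` with `v → u` or `v ↔ u`. -/
def bd (G : MixedGraph V) (u : V) : Set V :=
  {v | G.dir v u ∨ G.bi v u}

/-- A partially directed cycle: distinct vertices `f 0, …, f (n-1)` (`n ≥ 3`), read
cyclically, every consecutive pair joined by a directed or bidirected edge, with at
least one directed edge. -/
def IsPartiallyDirectedCycle (G : MixedGraph V) (n : ℕ) (f : ℕ → V) : Prop :=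
  3 ≤ n ∧ (∀ i < n, ∀ j < n, f i = f j → i = j) ∧
  (∀ i < n, G.dir (f i) (f ((i + 1) % n)) ∨ G.bi (f i) (f ((i + 1) % n))) ∧
  (∃ i < n, G.dir (f i) (f ((i + 1) % n)))

/-- An MVR chain graph is a mixed graph with no partially directed cycles. -/
def IsMVRChainGraph (G : MixedGraph V) : Prop :=
  ∀ (n : ℕ) (f : ℕ → V), ¬ G.IsPartiallyDirectedCycle n f

/-- A chain (mixed walk) in a mixed graph: each step uses `a → b`, `a ← b` or `a ↔ b`. -/
inductive Chain (G : MixedGraph V) : V → V → Type u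
  | nil (a : V) : Chain G a a
  | fwd {a b c : V} (h : G.dir a b) (p : Chain G b c) : Chain G a c
  | rev {a b c : V} (h : G.dir b a) (p : Chain G b c) : Chain G a c
  | bid {a b c : V} (h : G.bi a b) (p : Chain G b c) : Chain G a c

variable {G : MixedGraph V}

/-- The list of vertices of a chain. -/
def Chain.support {a b : V} (p : G.Chain a b) : List V :=
  match p with
  | .nil _ => [a]
  | .fwd _ q => a :: q.support
  | .rev _ q => a :: q.support
  | .bid _ q => a :: q.support

/-- For each edge of the chain its pair of arrowhead marks
`(arrowhead at left endpoint, arrowhead at right endpoint)`. -/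
def Chain.marks {a b : V} (p : G.Chain a b) : List (Bool × Bool) :=
  match p with
  | .nil _ => []
  | .fwd _ q => (false, true) :: q.marks
  | .rev _ q => (true, false) :: q.marks
  | .bid _ q => (true, true) :: q.marks

/-- The internal vertex lying between edges `i` and `i+1` of the chain (i.e. the vertex
at position `i+1` of the support) is a collider: both incident edges have an arrowhead
at it. -/
def Chain.ColliderAt {a b : V} (p : G.Chain a b) (i : ℕ) : Prop :=
  ∃ m₁ m₂ : Bool × Bool, p.marks[i]? = some m₁ ∧ p.marks[i + 1]? = some m₂ ∧
    m₁.2 = true ∧ m₂.1 = true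

/-- A chain is m-connecting given `Z` if every internal noncollider is not in `Z` and
every internal collider is in `An(Z)`. -/
def Chain.MConnecting {a b : V} (p : G.Chain a b) (Z : Set V) : Prop :=
  ∀ (i : ℕ) (w : V), p.support[i + 1]? = some w → i + 2 < p.support.length →
    (p.ColliderAt i → w ∈ G.Anc Z) ∧ (¬ p.ColliderAt i → w ∉ Z)

/-- A chain is blocked by `Z` if it is not m-connecting given `Z`. -/
def Chain.Blocked {a b : V} (p : G.Chain a b) (Z : Set V) : Prop :=
  ¬ p.MConnecting Z

/-- Vertices `u` and `v` are m-separated by `Z`: every chain (sequence of distinct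
vertices) between them is blocked by `Z`. -/
def MSeparated (G : MixedGraph V) (u v : V) (Z : Set V) : Prop :=
  ∀ p : G.Chain u v, p.support.Nodup → p.Blocked Z

/-- Sets `X` and `Y` are m-separated by `Z`. -/
def MSeparatedSets (G : MixedGraph V) (X Y Z : Set V) : Prop :=
  ∀ u ∈ X, ∀ v ∈ Y, G.MSeparated u v Z

/-- The undirected graph on `V` whose edges are the bidirected edges of `G`. -/
def biGraph (G : MixedGraph V) : SimpleGraph V where
  Adj a b := G.bi a b
  symm := ⟨fun _ _ h => G.bi_symm h⟩
  loopless := ⟨fun a h => G.bi_irrefl a h⟩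

/-- `τ` is a chain component of `G`: a connected component of the bidirected part. -/
def IsChainComponent (G : MixedGraph V) (τ : Set V) : Prop :=
  ∃ a : V, τ = {w | G.biGraph.Reachable a w}

/-- The parent set `pa_G(τ)` of a set of vertices `τ`. -/
def paSet (G : MixedGraph V) (τ : Set V) : Set V :=
  {a | a ∉ τ ∧ ∃ w ∈ τ, G.dir a w}

/-- `u` and `v` are collider connected: there is a chain (with distinct vertices)
from `u` to `v` on which every nonendpoint vertex is a collider. -/
def ColliderConnected (G : MixedGraph V) (u v : V) : Prop :=
  ∃ p : G.Chain u v, p.support.Nodup ∧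
    ∀ i : ℕ, i + 2 < p.support.length → p.ColliderAt i

/-- `T` with node-sets `C` is an m-separation tree for `G`: `T` is a tree, the nodes
cover `V`, and for every edge `(i, j)` of `T`, with separator `S = C i ∩ C j` and
`V₁`, `V₂` the unions of the node sets of the two subtrees obtained by deleting the
edge, the sets `V₁ \ S` and `V₂ \ S` are m-separated by `S` in `G`. -/
def IsMSepTree (G : MixedGraph V) {ι : Type v} (T : SimpleGraph ι) (C : ι → Set V) :
    Prop :=
  T.IsTree ∧ (⋃ i, C i) = Set.univ ∧
  ∀ i j : ι, T.Adj i j →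
    G.MSeparatedSets
      ((⋃ k ∈ {k : ι | (T.deleteEdges {s(i, j)}).Reachable i k}, C k) \ (C i ∩ C j))
      ((⋃ k ∈ {k : ι | (T.deleteEdges {s(i, j)}).Reachable j k}, C k) \ (C i ∩ C j))
      (C i ∩ C j)

end MixedGraph

/-- An undirected graph is triangulated (chordal) if every cycle of length at least 4
has a chord. -/
def IsChordal {W : Type u} (H : SimpleGraph W) : Prop :=
  ∀ (a : W) (c : H.Walk a a), c.IsCycle → 4 ≤ c.length →
    ∃ x y : W, x ∈ c.support ∧ y ∈ c.support ∧ H.Adj x y ∧ s(x, y) ∉ c.edges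

/-- `s` is a maximal clique of `H`. -/
def IsMaxClique {W : Type u} (H : SimpleGraph W) (s : Set W) : Prop :=
  H.IsClique s ∧ ∀ t : Set W, H.IsClique t → s ⊆ t → t = s

/-- `(T, C)` is a junction tree constructed from the undirected graph `H`:
`T` is a tree whose nodes `C i` are exactly the (maximal) cliques of some triangulated
supergraph `Ht` of `H`, satisfying the junction property. -/
def IsJunctionTreeFor {W : Type u} {ι : Type v} (T : SimpleGraph ι) (C : ι → Set W)
    (H : SimpleGraph W) : Prop :=
  T.IsTree ∧
  ∃ Ht : SimpleGraph W, H ≤ Ht ∧ IsChordal Ht ∧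
    Function.Injective C ∧
    (∀ i : ι, IsMaxClique Ht (C i)) ∧
    (∀ s : Set W, IsMaxClique Ht s → ∃ i : ι, C i = s) ∧
    (∀ (i j : ι) (p : T.Walk i j), p.IsPath → ∀ k ∈ p.support, C i ∩ C j ⊆ C k)

/-- In an undirected graph `H`, `Z` separates `X` and `Y`: every path between a vertex
of `X` and a vertex of `Y` passes through `Z`. -/
def USeparates {W : Type u} (H : SimpleGraph W) (X Y Z : Set W) : Prop :=
  ∀ u ∈ X, ∀ v ∈ Y, ∀ p : H.Walk u v, p.IsPath → ∃ z ∈ Z, z ∈ p.support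

/-- `H` is an undirected independence graph (UIG) for the mixed graph `G`: whenever a
set `Z` separates (nonempty, pairwise disjoint) `X` and `Y` in `H`, `Z` m-separates
`X` and `Y` in `G`. -/
def IsUIG {W : Type u} (H : SimpleGraph W) (G : MixedGraph W) : Prop :=
  ∀ X Y Z : Set W, X.Nonempty → Y.Nonempty → Disjoint X Y → Disjoint X Z →
    Disjoint Y Z → USeparates H X Y Z → G.MSeparatedSets X Y Z

end MVR
section Aux

open SimpleGraph

variable {V : Type} [Fintype V]

lemma aux_exists_maxClique (Ht : SimpleGraph V) {s : Set V} (hs : Ht.IsClique s) :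
    ∃ t, MVR.IsMaxClique Ht t ∧ s ⊆ t := by
  obtain ⟨t, ht, hmax⟩ := Set.Finite.exists_maximalFor id {t : Set V | Ht.IsClique t ∧ s ⊆ t}
    (Set.toFinite _) ⟨s, hs, subset_rfl⟩
  exact ⟨t, ⟨ht.1, fun t' hc hsub => Set.Subset.antisymm (hmax (j := t') ⟨hc, ht.2.trans hsub⟩ hsub) hsub⟩, ht.2⟩

variable {ι : Type} {T : SimpleGraph ι}

lemma aux_tree_side (hT : T.IsTree) {i j : ι} (hadj : T.Adj i j) (k : ι) :
    (T.deleteEdges {s(i, j)}).Reachable i k ∨ (T.deleteEdges {s(i, j)}).Reachable j k := by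
  classical
  obtain ⟨w⟩ := hT.isConnected.preconnected i k
  have hp : w.bypass.IsPath := w.bypass_isPath
  set p := w.bypass with hpdef
  clear_value p
  by_cases he : s(i, j) ∈ p.edges
  · cases p with
    | nil => simp at he
    | cons h q =>
      rename_i b
      rw [SimpleGraph.Walk.edges_cons, List.mem_cons] at he
      rw [SimpleGraph.Walk.cons_isPath_iff] at hp
      rcases he with he | he
      · have hbj : b = j := by
          rcases Sym2.eq_iff.mp he.symm with ⟨-, hbj⟩ | ⟨hij, -⟩
          · exact hbj
          · exact absurd hij hadj.ne
        subst hbj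
        refine Or.inr ⟨q.toDeleteEdges _ ?_⟩
        intro e hme
        simp only [Set.mem_singleton_iff]
        rintro rfl
        exact hp.2 (q.fst_mem_support_of_mem_edges hme)
      · exact absurd (q.fst_mem_support_of_mem_edges he) hp.2
  · exact Or.inl ⟨p.toDeleteEdges _ (by
      intro e hme
      simp only [Set.mem_singleton_iff]
      rintro rfl
      exact he hme)⟩

lemma aux_not_reach_both (hT : T.IsTree) {i j : ι} (hadj : T.Adj i j) {k : ι}
    (hi : (T.deleteEdges {s(i, j)}).Reachable i k)
    (hj : (T.deleteEdges {s(i, j)}).Reachable j k) : False := by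
  have hbridge : T.IsBridge s(i, j) :=
    (SimpleGraph.isAcyclic_iff_forall_adj_isBridge.mp hT.IsAcyclic) hadj
  exact (SimpleGraph.isBridge_iff.mp hbridge) (hi.trans hj.symm)

/-- In a tree, any path between vertices on opposite sides of a deleted edge uses that edge. -/
lemma aux_path_through (hT : T.IsTree) {i j : ι} (hadj : T.Adj i j) {k l : ι}
    (hk : (T.deleteEdges {s(i, j)}).Reachable i k)
    (hl : (T.deleteEdges {s(i, j)}).Reachable j l) :
    ∃ p : T.Walk k l, p.IsPath ∧ i ∈ p.support ∧ j ∈ p.support := by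
  classical
  obtain ⟨w⟩ := hT.isConnected.preconnected k l
  refine ⟨w.bypass, w.bypass_isPath, ?_⟩
  have he : s(i, j) ∈ w.bypass.edges := by
    by_contra he
    have hr : (T.deleteEdges {s(i, j)}).Reachable k l :=
      ⟨w.bypass.toDeleteEdges _ (by
        intro e hme
        simp only [Set.mem_singleton_iff]
        rintro rfl
        exact he hme)⟩
    exact aux_not_reach_both hT hadj (hi := hk.trans hr) (hj := hl)
  exact ⟨w.bypass.fst_mem_support_of_mem_edges he, w.bypass.snd_mem_support_of_mem_edges he⟩

/-- If every edge of `Ht` lies within `V₁` or within `V₂`, and `V₁ ∩ V₂ ⊆ S`, then any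
walk from `V₁` to `V₂` meets `S`. -/
lemma aux_walk_hits {Ht : SimpleGraph V} {V₁ V₂ S : Set V}
    (hE : ∀ ⦃a b : V⦄, Ht.Adj a b → (a ∈ V₁ ∧ b ∈ V₁) ∨ (a ∈ V₂ ∧ b ∈ V₂))
    (hS : V₁ ∩ V₂ ⊆ S) :
    ∀ {u v : V} (p : Ht.Walk u v), u ∈ V₁ → v ∈ V₂ → ∃ z ∈ S, z ∈ p.support := by
  intro u v p
  induction p with
  | nil => exact fun hu hv => ⟨_, hS ⟨hu, hv⟩, by simp⟩
  | cons h q ih =>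
    intro hu hv
    rcases hE h with ⟨h1, h2⟩ | ⟨h1, h2⟩
    · obtain ⟨z, hz, hzs⟩ := ih h2 hv
      exact ⟨z, hz, by simp [hzs]⟩
    · exact ⟨_, hS ⟨hu, h1⟩, by simp⟩

end Aux

/-- A junction tree constructed from an undirected independence graph for
an MVR chain graph `G` on a finite vertex set is an m-separation tree for `G`. -/
theorem MVR.junctionTree_of_UIG_isMSepTree
    {V : Type} [Fintype V] {ι : Type} [Fintype ι]
    (G : MVR.MixedGraph V) (hG : G.IsMVRChainGraph)
    (H : SimpleGraph V) (hUIG : MVR.IsUIG H G)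
    (T : SimpleGraph ι) (C : ι → Set V)
    (hJT : MVR.IsJunctionTreeFor T C H) :
    G.IsMSepTree T C := by
  obtain ⟨hTree, Ht, hle, _hchord, _hinj, _hmax, hsurj, hjunc⟩ := hJT
  have hcov : (⋃ i, C i) = Set.univ := by
    apply Set.eq_univ_iff_forall.mpr
    intro v
    obtain ⟨t, htmax, hsub⟩ := aux_exists_maxClique Ht (SimpleGraph.isClique_singleton v)
    obtain ⟨m, hm⟩ := hsurj t htmax
    exact Set.mem_iUnion.mpr ⟨m, hm ▸ hsub rfl⟩
  refine ⟨hTree, hcov, ?_⟩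
  intro i j hadj
  set S : Set V := C i ∩ C j with hSdef
  set V₁ : Set V := ⋃ k ∈ {k : ι | (T.deleteEdges {s(i, j)}).Reachable i k}, C k with hV₁
  set V₂ : Set V := ⋃ k ∈ {k : ι | (T.deleteEdges {s(i, j)}).Reachable j k}, C k with hV₂
  have hS12 : V₁ ∩ V₂ ⊆ S := by
    rintro v ⟨hv1, hv2⟩
    rw [hV₁, Set.mem_iUnion₂] at hv1
    rw [hV₂, Set.mem_iUnion₂] at hv2
    obtain ⟨k, hk, hvk⟩ := hv1
    obtain ⟨l, hl, hvl⟩ := hv2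
    obtain ⟨p, hp, hip, hjp⟩ := aux_path_through hTree hadj hk hl
    exact ⟨hjunc k l p hp i hip ⟨hvk, hvl⟩, hjunc k l p hp j hjp ⟨hvk, hvl⟩⟩
  have hE : ∀ ⦃a b : V⦄, Ht.Adj a b → (a ∈ V₁ ∧ b ∈ V₁) ∨ (a ∈ V₂ ∧ b ∈ V₂) := by
    intro a b hab
    obtain ⟨t, htmax, hsub⟩ := aux_exists_maxClique Ht
      (SimpleGraph.isClique_pair.mpr fun _ => hab)
    obtain ⟨m, rfl⟩ := hsurj t htmax
    have ha : a ∈ C m := hsub (Set.mem_insert _ _)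
    have hb : b ∈ C m := hsub (Set.mem_insert_iff.mpr (Or.inr rfl))
    rcases aux_tree_side hTree hadj m with hm | hm
    · exact Or.inl ⟨Set.mem_iUnion₂.mpr ⟨m, hm, ha⟩, Set.mem_iUnion₂.mpr ⟨m, hm, hb⟩⟩
    · exact Or.inr ⟨Set.mem_iUnion₂.mpr ⟨m, hm, ha⟩, Set.mem_iUnion₂.mpr ⟨m, hm, hb⟩⟩
  have hUsep : MVR.USeparates H (V₁ \ S) (V₂ \ S) S := by
    intro u hu v hv p _hp
    obtain ⟨z, hz, hzs⟩ := aux_walk_hits hE hS12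
      (p.transfer Ht fun e he => SimpleGraph.edgeSet_mono hle (p.edges_subset_edgeSet he))
      hu.1 hv.1
    rw [SimpleGraph.Walk.support_transfer] at hzs
    exact ⟨z, hz, hzs⟩
  by_cases hX : (V₁ \ S).Nonempty
  · by_cases hY : (V₂ \ S).Nonempty
    · refine hUIG _ _ _ hX hY ?_ Set.disjoint_sdiff_right.symm
        Set.disjoint_sdiff_right.symm hUsep
      rw [Set.disjoint_left]
      intro x hx1 hx2
      exact hx1.2 (hS12 ⟨hx1.1, hx2.1⟩)
    · intro u _hu v hv
      exact absurd ⟨v, hv⟩ hY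
  · intro u hu
    exact absurd ⟨u, hu⟩ hX
end

section
/- Let T be an m-separation tree for an MVR chain graph G = (V, E), and let K be a separator of T whose removal splits T into two subtrees with node-unions V1 and V2. Let ρ be a chain in G from a vertex u ∈ V1 \ K to a vertex v ∈ V2 \ K, and let W be the set of nonendpoint vertices on ρ. Then ρ is blocked by W ∩ K and by any set Z with W ∩ K ⊆ Z ⊆ V \ {u, v}. -/
namespace MVR
namespace MixedGraph

open Classical

variable {V : Type u} {G : MixedGraph V}

/-- Concatenation of chains. -/
def Chain.append : {a b c : V} → G.Chain a b → G.Chain b c → G.Chain a c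
  | _, _, _, .nil _, q => q
  | _, _, _, .fwd h p, q => .fwd h (p.append q)
  | _, _, _, .rev h p, q => .rev h (p.append q)
  | _, _, _, .bid h p, q => .bid h (p.append q)

@[simp] lemma Chain.nil_append {a c : V} (q : G.Chain a c) :
    (Chain.nil a).append q = q := rfl
@[simp] lemma Chain.fwd_append {a b x c : V} (h : G.dir a b) (p : G.Chain b x)
    (q : G.Chain x c) : (Chain.fwd h p).append q = .fwd h (p.append q) := rfl
@[simp] lemma Chain.rev_append {a b x c : V} (h : G.dir b a) (p : G.Chain b x)
    (q : G.Chain x c) : (Chain.rev h p).append q = .rev h (p.append q) := rfl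
@[simp] lemma Chain.bid_append {a b x c : V} (h : G.bi a b) (p : G.Chain b x)
    (q : G.Chain x c) : (Chain.bid h p).append q = .bid h (p.append q) := rfl

@[simp] lemma Chain.support_nil {a : V} : (Chain.nil a : G.Chain a a).support = [a] := rfl
@[simp] lemma Chain.support_fwd {a b c : V} (h : G.dir a b) (p : G.Chain b c) :
    (Chain.fwd h p).support = a :: p.support := rfl
@[simp] lemma Chain.support_rev {a b c : V} (h : G.dir b a) (p : G.Chain b c) :
    (Chain.rev h p).support = a :: p.support := rfl
@[simp] lemma Chain.support_bid {a b c : V} (h : G.bi a b) (p : G.Chain b c) :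
    (Chain.bid h p).support = a :: p.support := rfl

lemma Chain.support_ne_nil {a b : V} (p : G.Chain a b) : p.support ≠ [] := by
  cases p <;> simp

lemma Chain.support_eq_cons {a b : V} (p : G.Chain a b) :
    ∃ t, p.support = a :: t := by
  cases p <;> exact ⟨_, rfl⟩

lemma Chain.support_append {a b c : V} (p : G.Chain a b) (q : G.Chain b c) :
    (p.append q).support = p.support.dropLast ++ q.support := by
  induction p with
  | nil => simp
  | fwd h p ih => simpa [List.dropLast_cons_of_ne_nil (Chain.support_ne_nil p)] using ih q
  | rev h p ih => simpa [List.dropLast_cons_of_ne_nil (Chain.support_ne_nil p)] using ih q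
  | bid h p ih => simpa [List.dropLast_cons_of_ne_nil (Chain.support_ne_nil p)] using ih q

end MixedGraph
end MVR
namespace MVR
namespace MixedGraph

variable {V : Type u} {G : MixedGraph V}

open Classical in
/-- Invariant: every vertex judged as a collider is in `A`, every vertex judged as a
noncollider is not in `B`.  The boolean is the arrowhead mark at the start vertex of
the chain coming from the (virtual) previous edge; the start vertex is judged, the
final vertex is not. -/
def Chain.Inv (A B : Set V) : {a b : V} → Bool → G.Chain a b → Prop
  | _, _, _, .nil _ => True
  | a, _, _, .fwd _ p => a ∉ B ∧ p.Inv A B true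
  | a, _, m, .rev _ p => (if m then a ∈ A else a ∉ B) ∧ p.Inv A B false
  | a, _, m, .bid _ p => (if m then a ∈ A else a ∉ B) ∧ p.Inv A B true

@[simp] lemma Chain.Inv_nil {A B : Set V} {a : V} {m : Bool} :
    (Chain.nil a : G.Chain a a).Inv A B m := trivial
@[simp] lemma Chain.Inv_fwd {A B : Set V} {a b c : V} {m : Bool} (h : G.dir a b)
    (p : G.Chain b c) : (Chain.fwd h p).Inv A B m ↔ a ∉ B ∧ p.Inv A B true := Iff.rfl
@[simp] lemma Chain.Inv_rev {A B : Set V} {a b c : V} {m : Bool} (h : G.dir b a)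
    (p : G.Chain b c) :
    (Chain.rev h p).Inv A B m ↔ (if m then a ∈ A else a ∉ B) ∧ p.Inv A B false := Iff.rfl
@[simp] lemma Chain.Inv_bid {A B : Set V} {a b c : V} {m : Bool} (h : G.bi a b)
    (p : G.Chain b c) :
    (Chain.bid h p).Inv A B m ↔ (if m then a ∈ A else a ∉ B) ∧ p.Inv A B true := Iff.rfl

/-- The arrowhead mark at the end vertex `b` of a chain (the incoming mark `m` is
propagated through a `nil` chain). -/
def Chain.endM : {a b : V} → Bool → G.Chain a b → Bool
  | _, _, m, .nil _ => m
  | _, _, _, .fwd _ p => p.endM true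
  | _, _, _, .rev _ p => p.endM false
  | _, _, _, .bid _ p => p.endM true

@[simp] lemma Chain.endM_nil {a : V} {m : Bool} :
    (Chain.nil a : G.Chain a a).endM m = m := rfl
@[simp] lemma Chain.endM_fwd {a b c : V} {m : Bool} (h : G.dir a b) (p : G.Chain b c) :
    (Chain.fwd h p).endM m = p.endM true := rfl
@[simp] lemma Chain.endM_rev {a b c : V} {m : Bool} (h : G.dir b a) (p : G.Chain b c) :
    (Chain.rev h p).endM m = p.endM false := rfl
@[simp] lemma Chain.endM_bid {a b c : V} {m : Bool} (h : G.bi a b) (p : G.Chain b c) :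
    (Chain.bid h p).endM m = p.endM true := rfl

/-- The arrowhead mark at the start vertex of the first edge of a chain. -/
def Chain.headC : {a b : V} → G.Chain a b → Bool
  | _, _, .nil _ => false
  | _, _, .fwd _ _ => false
  | _, _, .rev _ _ => true
  | _, _, .bid _ _ => true

open Classical in
/-- Number of judged colliders not belonging to `S`. -/
noncomputable def Chain.badN (S : Set V) : {a b : V} → Bool → G.Chain a b → ℕ
  | _, _, _, .nil _ => 0
  | _, _, _, .fwd _ p => p.badN S true
  | a, _, m, .rev _ p => (if m = true ∧ a ∉ S then 1 else 0) + p.badN S false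
  | a, _, m, .bid _ p => (if m = true ∧ a ∉ S then 1 else 0) + p.badN S true

open Classical in
@[simp] lemma Chain.badN_nil {S : Set V} {a : V} {m : Bool} :
    (Chain.nil a : G.Chain a a).badN S m = 0 := rfl
@[simp] lemma Chain.badN_fwd {S : Set V} {a b c : V} {m : Bool} (h : G.dir a b)
    (p : G.Chain b c) : (Chain.fwd h p).badN S m = p.badN S true := rfl
open Classical in
@[simp] lemma Chain.badN_rev {S : Set V} {a b c : V} {m : Bool} (h : G.dir b a)
    (p : G.Chain b c) :
    (Chain.rev h p).badN S m = (if m = true ∧ a ∉ S then 1 else 0) + p.badN S false := rfl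
open Classical in
@[simp] lemma Chain.badN_bid {S : Set V} {a b c : V} {m : Bool} (h : G.bi a b)
    (p : G.Chain b c) :
    (Chain.bid h p).badN S m = (if m = true ∧ a ∉ S then 1 else 0) + p.badN S true := rfl

lemma Chain.Inv_append {A B : Set V} {a b c : V} (p : G.Chain a b) (q : G.Chain b c)
    {m : Bool} : (p.append q).Inv A B m ↔ p.Inv A B m ∧ q.Inv A B (p.endM m) := by
  induction p generalizing m with
  | nil => simp
  | fwd h p ih => simp [ih, and_assoc]
  | rev h p ih => simp [ih, and_assoc]
  | bid h p ih => simp [ih, and_assoc]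

lemma Chain.badN_append {S : Set V} {a b c : V} (p : G.Chain a b) (q : G.Chain b c)
    {m : Bool} : (p.append q).badN S m = p.badN S m + q.badN S (p.endM m) := by
  induction p generalizing m with
  | nil => simp
  | fwd h p ih => simp [ih]
  | rev h p ih => simp [ih]; omega
  | bid h p ih => simp [ih]; omega

/-- Rebuilding the judgment at the head of a chain with incoming mark `false`. -/
lemma Chain.Inv_false_of {A B : Set V} {a b : V} {m : Bool} (p : G.Chain a b)
    (h : p.Inv A B m) (ha : a ∉ B) : p.Inv A B false := by
  cases p with
  | nil => trivial
  | fwd h' p => exact h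
  | rev h' p => exact ⟨by simpa using ha, h.2⟩
  | bid h' p => exact ⟨by simpa using ha, h.2⟩

end MixedGraph
end MVR
namespace MVR
namespace MixedGraph

variable {V : Type u} {G : MixedGraph V}

lemma Chain.splitFirst {a b : V} (p : G.Chain a b) (x : V) (hx : x ∈ p.support) :
    ∃ (q₁ : G.Chain a x) (q₂ : G.Chain x b),
      p = q₁.append q₂ ∧ x ∉ q₁.support.dropLast := by
  induction p with
  | nil a =>
    simp only [support_nil, List.mem_singleton] at hx
    subst hx
    refine ⟨Chain.nil _, Chain.nil _, ?_, by simp⟩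
    rfl
  | @fwd a b c h p ih =>
    by_cases hax : x = a
    · subst hax
      refine ⟨Chain.nil x, Chain.fwd h p, ?_, by simp⟩
      rfl
    · simp only [support_fwd, List.mem_cons] at hx
      obtain ⟨q₁, q₂, hq, hn⟩ := ih (hx.resolve_left hax)
      refine ⟨Chain.fwd h q₁, q₂, ?_, ?_⟩
      · rw [hq]; rfl
      · rw [support_fwd, List.dropLast_cons_of_ne_nil (Chain.support_ne_nil q₁)]
        simp only [List.mem_cons, not_or]
        exact ⟨hax, hn⟩
  | @rev a b c h p ih =>
    by_cases hax : x = a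
    · subst hax
      refine ⟨Chain.nil x, Chain.rev h p, ?_, by simp⟩
      rfl
    · simp only [support_rev, List.mem_cons] at hx
      obtain ⟨q₁, q₂, hq, hn⟩ := ih (hx.resolve_left hax)
      refine ⟨Chain.rev h q₁, q₂, ?_, ?_⟩
      · rw [hq]; rfl
      · rw [support_rev, List.dropLast_cons_of_ne_nil (Chain.support_ne_nil q₁)]
        simp only [List.mem_cons, not_or]
        exact ⟨hax, hn⟩
  | @bid a b c h p ih =>
    by_cases hax : x = a
    · subst hax
      refine ⟨Chain.nil x, Chain.bid h p, ?_, by simp⟩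
      rfl
    · simp only [support_bid, List.mem_cons] at hx
      obtain ⟨q₁, q₂, hq, hn⟩ := ih (hx.resolve_left hax)
      refine ⟨Chain.bid h q₁, q₂, ?_, ?_⟩
      · rw [hq]; rfl
      · rw [support_bid, List.dropLast_cons_of_ne_nil (Chain.support_ne_nil q₁)]
        simp only [List.mem_cons, not_or]
        exact ⟨hax, hn⟩

lemma Chain.splitLast {a b : V} (p : G.Chain a b) (x : V) (hx : x ∈ p.support) :
    ∃ (q₁ : G.Chain a x) (q₂ : G.Chain x b),
      p = q₁.append q₂ ∧ x ∉ q₂.support.tail := by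
  induction p with
  | nil a =>
    simp only [support_nil, List.mem_singleton] at hx
    subst hx
    refine ⟨Chain.nil _, Chain.nil _, ?_, by simp⟩
    rfl
  | @fwd a b c h p ih =>
    by_cases hxp : x ∈ p.support
    · obtain ⟨q₁, q₂, hq, hn⟩ := ih hxp
      exact ⟨Chain.fwd h q₁, q₂, by rw [hq]; rfl, hn⟩
    · simp only [support_fwd, List.mem_cons] at hx
      obtain rfl := hx.resolve_right hxp
      refine ⟨Chain.nil _, Chain.fwd h p, ?_, by simpa using hxp⟩
      rfl
  | @rev a b c h p ih =>
    by_cases hxp : x ∈ p.support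
    · obtain ⟨q₁, q₂, hq, hn⟩ := ih hxp
      exact ⟨Chain.rev h q₁, q₂, by rw [hq]; rfl, hn⟩
    · simp only [support_rev, List.mem_cons] at hx
      obtain rfl := hx.resolve_right hxp
      refine ⟨Chain.nil _, Chain.rev h p, ?_, by simpa using hxp⟩
      rfl
  | @bid a b c h p ih =>
    by_cases hxp : x ∈ p.support
    · obtain ⟨q₁, q₂, hq, hn⟩ := ih hxp
      exact ⟨Chain.bid h q₁, q₂, by rw [hq]; rfl, hn⟩
    · simp only [support_bid, List.mem_cons] at hx
      obtain rfl := hx.resolve_right hxp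
      refine ⟨Chain.nil _, Chain.bid h p, ?_, by simpa using hxp⟩
      rfl

end MixedGraph
end MVR
namespace MVR
namespace MixedGraph

variable {V : Type u} {G : MixedGraph V}

@[simp] lemma Chain.marks_nil {a : V} : (Chain.nil a : G.Chain a a).marks = [] := rfl
@[simp] lemma Chain.marks_fwd {a b c : V} (h : G.dir a b) (p : G.Chain b c) :
    (Chain.fwd h p).marks = (false, true) :: p.marks := rfl
@[simp] lemma Chain.marks_rev {a b c : V} (h : G.dir b a) (p : G.Chain b c) :
    (Chain.rev h p).marks = (true, false) :: p.marks := rfl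
@[simp] lemma Chain.marks_bid {a b c : V} (h : G.bi a b) (p : G.Chain b c) :
    (Chain.bid h p).marks = (true, true) :: p.marks := rfl

/-- The judgments that `MConnecting` makes about internal vertices, with general
sets `A` (for colliders) and `B` (for noncolliders). -/
def Chain.Judg (A B : Set V) {a b : V} (p : G.Chain a b) : Prop :=
  ∀ (i : ℕ) (w : V), p.support[i + 1]? = some w → i + 2 < p.support.length →
    (p.ColliderAt i → w ∈ A) ∧ (¬ p.ColliderAt i → w ∉ B)

lemma Chain.mconnecting_iff_judg {Z : Set V} {a b : V} (p : G.Chain a b) :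
    p.MConnecting Z ↔ p.Judg (G.Anc Z) Z := Iff.rfl

/-- Judgment at the start vertex of a chain (vacuous for `nil`). -/
def Chain.SJ (A B : Set V) : {a b : V} → Bool → G.Chain a b → Prop
  | _, _, _, .nil _ => True
  | a, _, _, .fwd _ _ => a ∉ B
  | a, _, m, .rev _ _ => if m then a ∈ A else a ∉ B
  | a, _, m, .bid _ _ => if m then a ∈ A else a ∉ B

@[simp] lemma Chain.SJ_nil {A B : Set V} {a : V} {m : Bool} :
    (Chain.nil a : G.Chain a a).SJ A B m := trivial
@[simp] lemma Chain.SJ_fwd {A B : Set V} {a b c : V} {m : Bool} (h : G.dir a b)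
    (p : G.Chain b c) : (Chain.fwd h p).SJ A B m ↔ a ∉ B := Iff.rfl
@[simp] lemma Chain.SJ_rev {A B : Set V} {a b c : V} {m : Bool} (h : G.dir b a)
    (p : G.Chain b c) :
    (Chain.rev h p).SJ A B m ↔ if m then a ∈ A else a ∉ B := Iff.rfl
@[simp] lemma Chain.SJ_bid {A B : Set V} {a b c : V} {m : Bool} (h : G.bi a b)
    (p : G.Chain b c) :
    (Chain.bid h p).SJ A B m ↔ if m then a ∈ A else a ∉ B := Iff.rfl

lemma Chain.colliderAt_succ {a b a' b' : V} (p : G.Chain a b) (q : G.Chain a' b')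
    (x : Bool × Bool) (h : p.marks = x :: q.marks) (i : ℕ) :
    p.ColliderAt (i + 1) ↔ q.ColliderAt i := by
  simp [ColliderAt, h]

lemma Chain.judg_of_cons {A B : Set V} {a b a' b' : V} {p : G.Chain a b}
    {q : G.Chain a' b'} {x : V} {y : Bool × Bool}
    (hsup : p.support = x :: q.support) (hmk : p.marks = y :: q.marks)
    (hJ : p.Judg A B) : q.Judg A B := by
  intro i w hw hlen
  have h2 : i + 1 + 2 < p.support.length := by simp [hsup]; omega
  have := hJ (i + 1) w (by simpa [hsup] using hw) h2
  rwa [p.colliderAt_succ q y hmk] at this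

/-- `Inv` implies all internal judgments. -/
lemma Chain.Inv.judg {A B : Set V} {a b : V} {p : G.Chain a b} {m : Bool}
    (hInv : p.Inv A B m) : p.Judg A B := by
  induction p generalizing m with
  | nil a => intro i w hw hlen; simp at hlen
  | @fwd a b c h q ih =>
    obtain ⟨hJ, hq⟩ := hInv
    intro i w hw hlen
    match i with
    | 0 =>
      cases q with
      | nil => simp at hlen
      | @fwd b c' c h' q' =>
        obtain rfl : b = w := by simpa using hw
        refine ⟨fun hcol => ?_, fun _ => ?_⟩
        · exfalso; simpa [ColliderAt] using hcol
        · exact hq.1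
      | @rev b c' c h' q' =>
        obtain rfl : b = w := by simpa using hw
        refine ⟨fun _ => by simpa using hq.1, fun hn => ?_⟩
        exfalso; exact hn (by simp [ColliderAt])
      | @bid b c' c h' q' =>
        obtain rfl : b = w := by simpa using hw
        refine ⟨fun _ => by simpa using hq.1, fun hn => ?_⟩
        exfalso; exact hn (by simp [ColliderAt])
    | (n + 1) =>
      have hres := ih hq n w (by simpa using hw)
        (by simp only [support_fwd, List.length_cons] at hlen; omega)
      rwa [Chain.colliderAt_succ (Chain.fwd h q) q _ (marks_fwd h q) n]
  | @rev a b c h q ih =>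
    obtain ⟨hJ, hq⟩ := hInv
    intro i w hw hlen
    match i with
    | 0 =>
      cases q with
      | nil => simp at hlen
      | @fwd b c' c h' q' =>
        obtain rfl : b = w := by simpa using hw
        refine ⟨fun hcol => ?_, fun _ => ?_⟩
        · exfalso; simpa [ColliderAt] using hcol
        · exact hq.1
      | @rev b c' c h' q' =>
        obtain rfl : b = w := by simpa using hw
        refine ⟨fun hcol => ?_, fun _ => by simpa using hq.1⟩
        exfalso; simpa [ColliderAt] using hcol
      | @bid b c' c h' q' =>
        obtain rfl : b = w := by simpa using hw
        refine ⟨fun hcol => ?_, fun _ => by simpa using hq.1⟩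
        exfalso; simpa [ColliderAt] using hcol
    | (n + 1) =>
      have hres := ih hq n w (by simpa using hw)
        (by simp only [support_rev, List.length_cons] at hlen; omega)
      rwa [Chain.colliderAt_succ (Chain.rev h q) q _ (marks_rev h q) n]
  | @bid a b c h q ih =>
    obtain ⟨hJ, hq⟩ := hInv
    intro i w hw hlen
    match i with
    | 0 =>
      cases q with
      | nil => simp at hlen
      | @fwd b c' c h' q' =>
        obtain rfl : b = w := by simpa using hw
        refine ⟨fun hcol => ?_, fun _ => ?_⟩
        · exfalso; simpa [ColliderAt] using hcol
        · exact hq.1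
      | @rev b c' c h' q' =>
        obtain rfl : b = w := by simpa using hw
        refine ⟨fun _ => by simpa using hq.1, fun hn => ?_⟩
        exfalso; exact hn (by simp [ColliderAt])
      | @bid b c' c h' q' =>
        obtain rfl : b = w := by simpa using hw
        refine ⟨fun _ => by simpa using hq.1, fun hn => ?_⟩
        exfalso; exact hn (by simp [ColliderAt])
    | (n + 1) =>
      have hres := ih hq n w (by simpa using hw)
        (by simp only [support_bid, List.length_cons] at hlen; omega)
      rwa [Chain.colliderAt_succ (Chain.bid h q) q _ (marks_bid h q) n]

/-- Internal judgments plus a start judgment give `Inv`. -/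
lemma Chain.Judg.inv {A B : Set V} {a b : V} {p : G.Chain a b} {m : Bool}
    (hJ : p.Judg A B) (hS : p.SJ A B m) : p.Inv A B m := by
  induction p generalizing m with
  | nil a => trivial
  | @fwd a b c h q ih =>
    refine ⟨by simpa using hS, ih (Chain.judg_of_cons (support_fwd h q) (marks_fwd h q) hJ) ?_⟩
    cases q with
    | nil => simp
    | @fwd b c' c h' q' =>
      have := hJ 0 b (by simp) (by simp [List.length_pos_iff, Chain.support_ne_nil])
      simpa using this.2 (by simp [ColliderAt])
    | @rev b c' c h' q' =>
      have := hJ 0 b (by simp) (by simp [List.length_pos_iff, Chain.support_ne_nil])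
      simpa using this.1 (by simp [ColliderAt])
    | @bid b c' c h' q' =>
      have := hJ 0 b (by simp) (by simp [List.length_pos_iff, Chain.support_ne_nil])
      simpa using this.1 (by simp [ColliderAt])
  | @rev a b c h q ih =>
    refine ⟨by simpa using hS, ih (Chain.judg_of_cons (support_rev h q) (marks_rev h q) hJ) ?_⟩
    cases q with
    | nil => simp
    | @fwd b c' c h' q' =>
      have := hJ 0 b (by simp) (by simp [List.length_pos_iff, Chain.support_ne_nil])
      simpa using this.2 (by simp [ColliderAt])
    | @rev b c' c h' q' =>
      have := hJ 0 b (by simp) (by simp [List.length_pos_iff, Chain.support_ne_nil])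
      simpa using this.2 (by simp [ColliderAt])
    | @bid b c' c h' q' =>
      have := hJ 0 b (by simp) (by simp [List.length_pos_iff, Chain.support_ne_nil])
      simpa using this.2 (by simp [ColliderAt])
  | @bid a b c h q ih =>
    refine ⟨by simpa using hS, ih (Chain.judg_of_cons (support_bid h q) (marks_bid h q) hJ) ?_⟩
    cases q with
    | nil => simp
    | @fwd b c' c h' q' =>
      have := hJ 0 b (by simp) (by simp [List.length_pos_iff, Chain.support_ne_nil])
      simpa using this.2 (by simp [ColliderAt])
    | @rev b c' c h' q' =>
      have := hJ 0 b (by simp) (by simp [List.length_pos_iff, Chain.support_ne_nil])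
      simpa using this.1 (by simp [ColliderAt])
    | @bid b c' c h' q' =>
      have := hJ 0 b (by simp) (by simp [List.length_pos_iff, Chain.support_ne_nil])
      simpa using this.1 (by simp [ColliderAt])

end MixedGraph
end MVR
namespace MVR
namespace MixedGraph

variable {V : Type u} {G : MixedGraph V}

@[simp] lemma Chain.headC_nil {a : V} : (Chain.nil a : G.Chain a a).headC = false := rfl
@[simp] lemma Chain.headC_fwd {a b c : V} (h : G.dir a b) (p : G.Chain b c) :
    (Chain.fwd h p).headC = false := rfl
@[simp] lemma Chain.headC_rev {a b c : V} (h : G.dir b a) (p : G.Chain b c) :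
    (Chain.rev h p).headC = true := rfl
@[simp] lemma Chain.headC_bid {a b c : V} (h : G.bi a b) (p : G.Chain b c) :
    (Chain.bid h p).headC = true := rfl

/-- A descending directed chain from `c` to `z ∈ an⁻¹`, all of whose vertices are
`c` or strict descendants of `c`. -/
lemma exists_fwd_chain {c z : V} (hcz : Relation.TransGen G.dir c z) :
    ∃ π : G.Chain c z,
      (∀ (A B : Set V) (m : Bool),
        (∀ x, x = c ∨ Relation.TransGen G.dir c x → x ∉ B) → π.Inv A B m) ∧
      (∀ (S : Set V) (m : Bool), π.badN S m = 0) := by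
  induction hcz using Relation.TransGen.head_induction_on with
  | single h =>
    exact ⟨.fwd h (.nil z), fun A B m hB => ⟨hB _ (Or.inl rfl), trivial⟩,
      fun S m => rfl⟩
  | head h h' ih =>
    obtain ⟨π₀, hInv, hbad⟩ := ih
    refine ⟨.fwd h π₀, fun A B m hB => ⟨hB _ (Or.inl rfl), hInv A B true fun x hx => ?_⟩,
      fun S m => hbad S true⟩
    rcases hx with rfl | hx
    · exact hB _ (Or.inr (Relation.TransGen.single h))
    · exact hB _ (Or.inr (Relation.TransGen.head h hx))

/-- The reversed descending chain, from `z` up to `c`. -/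
lemma exists_rev_chain {c z : V} (hcz : Relation.TransGen G.dir c z) :
    ∃ π : G.Chain z c,
      (∀ A B : Set V,
        (∀ x, x = c ∨ Relation.TransGen G.dir c x → x ∉ B) → π.Inv A B false) ∧
      (∀ S : Set V, π.badN S false = 0) ∧ π.endM false = false := by
  induction hcz with
  | single h =>
    exact ⟨.rev h (.nil c), fun A B hB => ⟨by simpa using hB _ (Or.inr (.single h)),
      trivial⟩, fun S => by simp, rfl⟩
  | tail hcb hbz ih =>
    obtain ⟨π₀, hInv, hbad, hend⟩ := ih
    refine ⟨.rev hbz π₀,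
      fun A B hB => ⟨by simpa using hB _ (Or.inr (hcb.tail hbz)), hInv A B hB⟩,
      fun S => by simp [hbad S], by simpa using hend⟩

lemma Chain.Inv_headC_true {A B : Set V} {c b : V} {q : G.Chain c b}
    (h : q.Inv A B true) (hh : q.headC = true) : c ∈ A := by
  cases q with
  | nil => simp at hh
  | fwd => simp at hh
  | rev h' p => simpa using h.1
  | bid h' p => simpa using h.1

open Classical in
lemma Chain.badN_headC_true {S : Set V} {c b : V} (q : G.Chain c b)
    (hh : q.headC = true) (hc : c ∉ S) : q.badN S true = q.badN S false + 1 := by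
  cases q with
  | nil => simp at hh
  | fwd => simp at hh
  | rev h' p => simp [hc]; omega
  | bid h' p => simp [hc]; omega

open Classical in
lemma Chain.findbad {S : Set V} : ∀ {a b : V} (q : G.Chain a b) (m : Bool),
    q.badN S m ≠ 0 →
    ∃ (c : V) (q₁ : G.Chain a c) (q₂ : G.Chain c b),
      q = q₁.append q₂ ∧ q₁.endM m = true ∧ q₂.headC = true ∧ c ∉ S := by
  intro a b q
  induction q with
  | nil a => intro m hm; simp at hm
  | @fwd a b c h p ih =>
    intro m hm
    obtain ⟨c', q₁, q₂, heq, hend, hhead, hcS⟩ := ih true (by simpa using hm)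
    exact ⟨c', .fwd h q₁, q₂, by rw [heq]; rfl, hend, hhead, hcS⟩
  | @rev a b c h p ih =>
    intro m hm
    by_cases hbad : m = true ∧ a ∉ S
    · exact ⟨a, .nil a, .rev h p, rfl, hbad.1, rfl, hbad.2⟩
    · rw [badN_rev, if_neg hbad] at hm
      obtain ⟨c', q₁, q₂, heq, hend, hhead, hcS⟩ := ih false (by simpa using hm)
      exact ⟨c', .rev h q₁, q₂, by rw [heq]; rfl, hend, hhead, hcS⟩
  | @bid a b c h p ih =>
    intro m hm
    by_cases hbad : m = true ∧ a ∉ S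
    · exact ⟨a, .nil a, .bid h p, rfl, hbad.1, rfl, hbad.2⟩
    · rw [badN_bid, if_neg hbad] at hm
      obtain ⟨c', q₁, q₂, heq, hend, hhead, hcS⟩ := ih true (by simpa using hm)
      exact ⟨c', .bid h q₁, q₂, by rw [heq]; rfl, hend, hhead, hcS⟩

end MixedGraph
end MVR
namespace MVR
namespace MixedGraph

variable {V : Type u} {G : MixedGraph V}

open Classical in
lemma Chain.Inv_strengthen {A S B : Set V} : ∀ {a b : V} (q : G.Chain a b) (m : Bool),
    q.badN S m = 0 → q.Inv (A ∪ S) B m → q.Inv S B m := by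
  intro a b q
  induction q with
  | nil a => intro m _ _; trivial
  | @fwd a b c h p ih => exact fun m hbad hI => ⟨hI.1, ih true (by simpa using hbad) hI.2⟩
  | @rev a b c h p ih =>
    intro m hbad hI
    rw [badN_rev, Nat.add_eq_zero] at hbad
    refine ⟨?_, ih false hbad.2 hI.2⟩
    cases m with
    | false => simpa using hI.1
    | true =>
      have haS : a ∈ S := by
        by_contra haS
        simpa [haS] using hbad.1
      simpa using haS
  | @bid a b c h p ih =>
    intro m hbad hI
    rw [badN_bid, Nat.add_eq_zero] at hbad
    refine ⟨?_, ih true hbad.2 hI.2⟩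
    cases m with
    | false => simpa using hI.1
    | true =>
      have haS : a ∈ S := by
        by_contra haS
        simpa [haS] using hbad.1
      simpa using haS

lemma Chain.two_le_support_length {a b : V} (q : G.Chain a b) (hab : a ≠ b) :
    2 ≤ q.support.length := by
  cases q with
  | nil => exact absurd rfl hab
  | fwd h p => simpa [Nat.succ_le, List.length_pos_iff] using Chain.support_ne_nil p
  | rev h p => simpa [Nat.succ_le, List.length_pos_iff] using Chain.support_ne_nil p
  | bid h p => simpa [Nat.succ_le, List.length_pos_iff] using Chain.support_ne_nil p

open Classical

/-- Walk-to-path: there is no chain (with arbitrary vertex repetitions) between the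
two sides of a separator `K`, all of whose judged colliders are in `An(K)` and whose
judged noncolliders avoid `K`. -/
lemma main_nodup {V₁ V₂ K : Set V}
    (SEP : ∀ a ∈ V₁, ∀ b ∈ V₂, G.MSeparated a b K)
    (hCov : ∀ x : V, x ∈ K ∨ x ∈ V₁ ∨ x ∈ V₂)
    (h1 : ∀ x ∈ V₁, x ∉ K) (_h2 : ∀ x ∈ V₂, x ∉ K) :
    ∀ (n : ℕ) {a b : V} (q : G.Chain a b), q.support.length ≤ n →
      a ∈ V₁ → b ∈ V₂ → q.Inv (G.Anc K) K false → False := by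
  intro n
  induction n with
  | zero =>
    intro a b q hlen _ _ _
    have := List.length_pos_iff.2 (Chain.support_ne_nil q)
    omega
  | succ n ih =>
    intro a b q hlen ha hb hq
    by_cases hnd : q.support.Nodup
    · exact SEP a ha b hb q hnd ((q.mconnecting_iff_judg).2 hq.judg)
    · obtain ⟨x, hx⟩ := List.exists_duplicate_iff_not_nodup.2 hnd
      have hx2 : 2 ≤ q.support.count x := List.duplicate_iff_two_le_count.1 hx
      have hxmem : x ∈ q.support := hx.mem
      by_cases hxa : x = a
      · subst hxa
        obtain ⟨q₁, q₂, heq, hnt⟩ := q.splitLast x hxmem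
        rw [heq] at hq hlen hx2
        rw [Chain.Inv_append] at hq
        obtain ⟨t, ht⟩ := Chain.support_eq_cons q₂
        have hnt' : x ∉ t := by simpa [ht] using hnt
        have hcnt2 : q₂.support.count x = 1 := by
          rw [ht]
          simp [List.count_cons, List.count_eq_zero_of_not_mem hnt']
        rw [Chain.support_append, List.count_append, hcnt2] at hx2
        have hd1 : 1 ≤ q₁.support.dropLast.length :=
          List.length_pos_iff.2 fun hh => by simp [hh] at hx2
        rw [Chain.support_append, List.length_append] at hlen
        refine ih q₂ (by omega) ha hb ?_
        exact Chain.Inv_false_of q₂ hq.2 (h1 x ha)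
      · by_cases hxb : x = b
        · subst hxb
          obtain ⟨q₁, q₂, heq, hnt⟩ := q.splitFirst x hxmem
          rw [heq] at hq hlen hx2
          rw [Chain.Inv_append] at hq
          rw [Chain.support_append, List.count_append,
            List.count_eq_zero_of_not_mem hnt] at hx2
          have hq2len : 2 ≤ q₂.support.length :=
            le_trans (by simpa using hx2) List.count_le_length
          have hq1len : 1 ≤ q₁.support.length :=
            List.length_pos_iff.2 (Chain.support_ne_nil q₁)
          rw [Chain.support_append, List.length_append, List.length_dropLast] at hlen
          exact ih q₁ (by omega) ha hb hq.1
        · -- x is an internal repeated vertex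
          obtain ⟨q₁, r, heq, hq1x⟩ := q.splitFirst x hxmem
          have hxr : x ∈ r.support := by
            obtain ⟨t, ht⟩ := Chain.support_eq_cons r
            rw [ht]; exact List.mem_cons_self
          obtain ⟨r₁, q₂, heqr, hq2x⟩ := r.splitLast x hxr
          rw [heqr] at heq
          rw [heq] at hq hlen hx2
          rw [Chain.Inv_append] at hq
          obtain ⟨hI1, hIr⟩ := hq
          rw [Chain.Inv_append] at hIr
          obtain ⟨hIr1, hIq2⟩ := hIr
          obtain ⟨t, ht⟩ := Chain.support_eq_cons q₂
          have hq2x' : x ∉ t := by simpa [ht] using hq2x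
          have hcnt2 : q₂.support.count x = 1 := by
            rw [ht]
            simp [List.count_cons, List.count_eq_zero_of_not_mem hq2x']
          rw [Chain.support_append, Chain.support_append,
            List.count_append, List.count_append, hcnt2,
            List.count_eq_zero_of_not_mem hq1x] at hx2
          have hr1len : 1 ≤ r₁.support.dropLast.length :=
            List.length_pos_iff.2 fun hh => by simp [hh] at hx2
          by_cases hxK : x ∈ K
          · -- middle cut; the junction becomes a collider in `K ⊆ An(K)`
            have hxA : x ∈ G.Anc K := Or.inr hxK
            -- analyse the head of r₁ : its judgment forces `q₁.endM false = true`
            have hm1 : q₁.endM false = true := by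
              cases r₁ with
              | nil => simp at hr1len
              | fwd h' p' => exact absurd hIr1.1 (by simp [hxK])
              | rev h' p' =>
                by_contra hm
                rw [Bool.not_eq_true] at hm
                rw [Chain.Inv_rev, hm] at hIr1
                simp [hxK] at hIr1
              | bid h' p' =>
                by_contra hm
                rw [Bool.not_eq_true] at hm
                rw [Chain.Inv_bid, hm] at hIr1
                simp [hxK] at hIr1
            -- rebuild the judgment at the head of q₂ with incoming mark `true`
            have hIq2' : q₂.Inv (G.Anc K) K (q₁.endM false) := by
              rw [hm1]
              cases q₂ with
              | nil => trivial
              | fwd h' p' => exact absurd hIq2.1 (by simp [hxK])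
              | rev h' p' => exact ⟨by simpa using hxA, hIq2.2⟩
              | bid h' p' => exact ⟨by simpa using hxA, hIq2.2⟩
            refine ih (q₁.append q₂) ?_ ha hb ?_
            · simp only [Chain.support_append, List.length_append,
                List.length_dropLast] at hlen ⊢
              simp only [List.length_dropLast] at hr1len
              omega
            · rw [Chain.Inv_append]
              exact ⟨hI1, hIq2'⟩
          · rcases hCov x with hxK' | hx1 | hx2'
            · exact hxK hxK'
            · -- x ∈ V₁ : use the suffix from x to b
              have hq1nn : 2 ≤ q₁.support.length := q₁.two_le_support_length (fun hh => hxa hh.symm)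
              refine ih q₂ ?_ hx1 hb (Chain.Inv_false_of q₂ hIq2 hxK)
              simp only [Chain.support_append, List.length_append,
                List.length_dropLast] at hlen
              simp only [List.length_dropLast] at hr1len
              omega
            · -- x ∈ V₂ : use the prefix from a to x
              have hq2nn : 1 ≤ q₂.support.length :=
                List.length_pos_iff.2 (Chain.support_ne_nil q₂)
              have hq1nn : 1 ≤ q₁.support.length :=
                List.length_pos_iff.2 (Chain.support_ne_nil q₁)
              refine ih q₁ ?_ ha hx2' hI1
              simp only [Chain.support_append, List.length_append,
                List.length_dropLast] at hlen
              simp only [List.length_dropLast] at hr1len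
              omega

end MixedGraph
end MVR
namespace MVR
namespace MixedGraph

variable {V : Type u} {G : MixedGraph V}

open Classical

/-- The main induction: no chain between the two sides of the separator `K` whose
judged noncolliders avoid `K` and whose judged colliders are in `An(Z) ∪ An(K)`. -/
lemma main_bad {V₁ V₂ K Z : Set V}
    (SEP : ∀ a ∈ V₁, ∀ b ∈ V₂, G.MSeparated a b K)
    (hCov : ∀ x : V, x ∈ K ∨ x ∈ V₁ ∨ x ∈ V₂)
    (h1 : ∀ x ∈ V₁, x ∉ K) (h2 : ∀ x ∈ V₂, x ∉ K) :
    ∀ (n : ℕ) {a b : V} (q : G.Chain a b), q.badN (G.Anc K) false ≤ n →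
      a ∈ V₁ → b ∈ V₂ → q.Inv (G.Anc Z ∪ G.Anc K) K false → False := by
  intro n
  induction n with
  | zero =>
    intro a b q hbad ha hb hq
    exact main_nodup SEP hCov h1 h2 q.support.length q le_rfl ha hb
      (q.Inv_strengthen false (Nat.le_zero.1 hbad) hq)
  | succ n ih =>
    intro a b q hbad ha hb hq
    by_cases h0 : q.badN (G.Anc K) false = 0
    · exact main_nodup SEP hCov h1 h2 q.support.length q le_rfl ha hb
        (q.Inv_strengthen false h0 hq)
    · obtain ⟨c, q₁, q₂, heq, hend, hhead, hcK⟩ := q.findbad false h0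
      rw [heq] at hq hbad
      rw [Chain.Inv_append, hend] at hq
      obtain ⟨hI1, hI2⟩ := hq
      have hcA : c ∈ G.Anc Z ∪ G.Anc K := Chain.Inv_headC_true hI2 hhead
      have hcZ : c ∈ G.Anc Z := hcA.resolve_right hcK
      have hcKK : c ∉ K := fun hh => hcK (Or.inr hh)
      have hq2c : q₂.badN (G.Anc K) true = q₂.badN (G.Anc K) false + 1 :=
        q₂.badN_headC_true hhead hcK
      rw [Chain.badN_append, hend, hq2c] at hbad
      have VAC : ∀ x, x = c ∨ Relation.TransGen G.dir c x → x ∉ K := by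
        rintro x (rfl | hx) hxK
        · exact hcKK hxK
        · exact hcK (Or.inl ⟨x, hxK, hx⟩)
      rcases hcZ with hanc | hZ
      · obtain ⟨z, hzZ, hcz⟩ := hanc
        have hzK : z ∉ K := VAC z (Or.inr hcz)
        rcases hCov z with hzK' | hz1 | hz2
        · exact hzK hzK'
        · -- z ∈ V₁ : go from z up to c and then along q₂ to b
          obtain ⟨π, hπInv, hπbad, hπend⟩ := exists_rev_chain hcz
          refine ih (π.append q₂) ?_ hz1 hb ?_
          · rw [Chain.badN_append, hπbad, hπend]
            omega
          · rw [Chain.Inv_append, hπend]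
            exact ⟨hπInv _ _ VAC, Chain.Inv_false_of q₂ hI2 hcKK⟩
        · -- z ∈ V₂ : go along q₁ to c and then down to z
          obtain ⟨π, hπInv, hπbad⟩ := exists_fwd_chain hcz
          refine ih (q₁.append π) ?_ ha hz2 ?_
          · rw [Chain.badN_append, hπbad]
            omega
          · rw [Chain.Inv_append]
            exact ⟨hI1, hπInv _ _ _ VAC⟩
      · -- c itself lies in Z ; use it as a new endpoint
        rcases hCov c with hcK' | hc1 | hc2
        · exact hcKK hcK'
        · exact ih q₂ (by omega) hc1 hb (Chain.Inv_false_of q₂ hI2 hcKK)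
        · exact ih q₁ (by omega) ha hc2 hI1

end MixedGraph
end MVR
namespace MVR
namespace MixedGraph

variable {V : Type u} {G : MixedGraph V}

lemma Chain.support_getLast? {a b : V} (p : G.Chain a b) :
    p.support.getLast? = some b := by
  induction p with
  | nil a => rfl
  | @fwd a b c h q ih =>
    obtain ⟨t, ht⟩ := Chain.support_eq_cons q
    rw [support_fwd, ht, List.getLast?_cons_cons, ← ht, ih]
  | @rev a b c h q ih =>
    obtain ⟨t, ht⟩ := Chain.support_eq_cons q
    rw [support_rev, ht, List.getLast?_cons_cons, ← ht, ih]
  | @bid a b c h q ih =>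
    obtain ⟨t, ht⟩ := Chain.support_eq_cons q
    rw [support_bid, ht, List.getLast?_cons_cons, ← ht, ih]

lemma Chain.SJ_false {A B : Set V} {a b : V} (p : G.Chain a b) (ha : a ∉ B) :
    p.SJ A B false := by
  cases p <;> simp [ha]

end MixedGraph

/-- In a tree with the edge `(i, j)` deleted, every vertex reachable in the original
graph is still reachable from `i` or from `j`. -/
lemma tree_side {ι : Type v} (T : SimpleGraph ι) (i j : ι) :
    ∀ {a k : ι} (_ : T.Walk a k),
      ((T.deleteEdges {s(i, j)}).Reachable i a ∨ (T.deleteEdges {s(i, j)}).Reachable j a) →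
      ((T.deleteEdges {s(i, j)}).Reachable i k ∨ (T.deleteEdges {s(i, j)}).Reachable j k) := by
  intro a k w
  induction w with
  | nil => exact id
  | @cons a m k hadj w' ih =>
    intro hside
    apply ih
    by_cases he : s(a, m) = s(i, j)
    · rw [Sym2.eq_iff] at he
      rcases he with ⟨rfl, rfl⟩ | ⟨rfl, rfl⟩
      · exact Or.inr (SimpleGraph.Reachable.refl _)
      · exact Or.inl (SimpleGraph.Reachable.refl _)
    · have hadj' : (T.deleteEdges {s(i, j)}).Adj a m := by
        rw [SimpleGraph.deleteEdges_adj]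
        exact ⟨hadj, by simpa using he⟩
      exact hside.imp (fun h => h.trans hadj'.reachable) (fun h => h.trans hadj'.reachable)

end MVR
/-- Let `T` be an m-separation tree for an MVR chain graph `G`, `K` the
separator of an edge `(i, j)` of `T` splitting the node-unions into `V₁` and `V₂`, and
`ρ` a chain from `u ∈ V₁ \ K` to `v ∈ V₂ \ K` with nonendpoint-vertex set `W`.  Then
`ρ` is blocked by `W ∩ K` and by every `Z` with `W ∩ K ⊆ Z ⊆ V \ {u, v}`. -/
theorem MVR.blocked_of_separator
    {V : Type} {ι : Type}
    (G : MVR.MixedGraph V) (hG : G.IsMVRChainGraph)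
    (T : SimpleGraph ι) (C : ι → Set V) (hT : G.IsMSepTree T C)
    (i j : ι) (hij : T.Adj i j)
    {u v : V}
    (hu : u ∈ (⋃ k ∈ {k : ι | (T.deleteEdges {s(i, j)}).Reachable i k}, C k) \
      (C i ∩ C j))
    (hv : v ∈ (⋃ k ∈ {k : ι | (T.deleteEdges {s(i, j)}).Reachable j k}, C k) \
      (C i ∩ C j))
    (p : G.Chain u v) (hp : p.support.Nodup)
    (W : Set V) (hW : W = {w : V | w ∈ p.support ∧ w ≠ u ∧ w ≠ v}) :
    p.Blocked (W ∩ (C i ∩ C j)) ∧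
      ∀ Z : Set V, W ∩ (C i ∩ C j) ⊆ Z → Z ⊆ Set.univ \ {u, v} → p.Blocked Z := by
  classical
  obtain ⟨hTree, hCover, hSep⟩ := hT
  set K : Set V := C i ∩ C j with hK
  set V₁ : Set V :=
    (⋃ k ∈ {k : ι | (T.deleteEdges {s(i, j)}).Reachable i k}, C k) \ K with hV₁
  set V₂ : Set V :=
    (⋃ k ∈ {k : ι | (T.deleteEdges {s(i, j)}).Reachable j k}, C k) \ K with hV₂
  have SEP : ∀ a ∈ V₁, ∀ b ∈ V₂, G.MSeparated a b K := hSep i j hij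
  have h1 : ∀ x ∈ V₁, x ∉ K := fun x hx => hx.2
  have h2 : ∀ x ∈ V₂, x ∉ K := fun x hx => hx.2
  have hCov : ∀ x : V, x ∈ K ∨ x ∈ V₁ ∨ x ∈ V₂ := by
    intro x
    by_cases hxK : x ∈ K
    · exact Or.inl hxK
    · right
      have hx : x ∈ ⋃ k, C k := hCover.symm ▸ Set.mem_univ x
      obtain ⟨k, hk⟩ := Set.mem_iUnion.1 hx
      obtain ⟨w⟩ := hTree.isConnected.preconnected i k
      rcases tree_side T i j w (Or.inl (SimpleGraph.Reachable.refl _)) with hki | hkj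
      · exact Or.inl ⟨Set.mem_biUnion hki hk, hxK⟩
      · exact Or.inr ⟨Set.mem_biUnion hkj hk, hxK⟩
  have H2 : ∀ Z : Set V, W ∩ K ⊆ Z → Z ⊆ Set.univ \ {u, v} → p.Blocked Z := by
    intro Z hZ1 _hZ2 hcon
    have hjudg : p.Judg (G.Anc Z ∪ G.Anc K) K := by
      intro i' w hw hlen
      have h0 := hcon i' w hw hlen
      refine ⟨fun hc => Or.inl (h0.1 hc), fun hn hwK => ?_⟩
      have hwsup : w ∈ p.support := List.mem_of_getElem? hw
      obtain ⟨t, ht⟩ := p.support_eq_cons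
      have hwu : w ≠ u := by
        rintro rfl
        have h01 : p.support[0]? = some w := by rw [ht]; simp
        have := (List.getElem?_inj (l := p.support) (i := i' + 1) (by omega) hp).1
          (hw.trans h01.symm)
        omega
      have hwv : w ≠ v := by
        rintro rfl
        have hL : p.support[p.support.length - 1]? = some w := by
          rw [← List.getLast?_eq_getElem?]
          exact p.support_getLast?
        have := (List.getElem?_inj (l := p.support) (i := i' + 1) (by omega) hp).1
          (hw.trans hL.symm)
        omega
      exact h0.2 hn (hZ1 ⟨by rw [hW]; exact ⟨hwsup, hwu, hwv⟩, hwK⟩)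
    have hSJ : p.SJ (G.Anc Z ∪ G.Anc K) K false := p.SJ_false hu.2
    exact MixedGraph.main_bad SEP hCov h1 h2 (p.badN (G.Anc K) false) p le_rfl hu hv
      (hjudg.inv hSJ)
  refine ⟨H2 (W ∩ K) le_rfl ?_, H2⟩
  intro w hw'
  have hwW : w ∈ W := hw'.1
  rw [hW] at hwW
  refine ⟨trivial, ?_⟩
  simp only [Set.mem_insert_iff, Set.mem_singleton_iff]
  rintro (rfl | rfl)
  · exact hwW.2.1 rfl
  · exact hwW.2.2 rfl
end

section
/- Let u and v be two non-adjacent vertices in an MVR chain graph G, and let ρ be a chain from u to v whose vertex set is not contained in An({u, v}). Then ρ is blocked by every subset S of an({u, v}) with u, v ∉ S. -/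
namespace MVR.MixedGraph

variable {V : Type} {G : MixedGraph V}

lemma Chain.support_length_pos {a b : V} (p : G.Chain a b) : 0 < p.support.length := by
  cases p <;> simp [Chain.support]

lemma mconn_tail {S : Set V} {a b c : V} {m : Bool × Bool}
    {p : G.Chain a b} {q : G.Chain c b}
    (hs : p.support = a :: q.support) (hmk : p.marks = m :: q.marks)
    (h : p.MConnecting S) : q.MConnecting S := by
  intro i w hw hlen
  have hw' : p.support[(i+1) + 1]? = some w := by rw [hs]; simpa using hw
  have hlen' : (i+1) + 2 < p.support.length := by
    have : p.support.length = q.support.length + 1 := by rw [hs]; simp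
    omega
  have hcol : q.ColliderAt i ↔ p.ColliderAt (i+1) := by
    unfold Chain.ColliderAt
    rw [hmk]
    simp
  have hh := h (i+1) w hw' hlen'
  exact ⟨fun hc => hh.1 (hcol.mp hc), fun hc => hh.2 (fun hc' => hc (hcol.mpr hc'))⟩

lemma fwd_head_mem {S A : Set V}
    (hAnS : G.Anc S ⊆ A) (h1 : ∀ x y : V, G.dir x y → y ∈ A → x ∈ A)
    {c b : V} (q : G.Chain c b) :
    ∀ {a : V} (h : G.dir a c),
      (Chain.fwd h q).MConnecting S → b ∈ A → a ∈ A := by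
  induction q with
  | nil d => intro a h _ hb; exact h1 a d h hb
  | fwd h' q' ih =>
      intro a h hm hb
      have hq : (Chain.fwd h' q').MConnecting S := mconn_tail (m := (false, true)) (by simp [Chain.support]) (by simp [Chain.marks]) hm
      exact h1 _ _ h (ih h' hq hb)
  | rev h' q' ih =>
      intro a h hm hb
      rename_i x y z
      have hsup : (Chain.fwd h (Chain.rev h' q')).support[0 + 1]? = some x := by
        simp [Chain.support]
      have hlen : 0 + 2 < (Chain.fwd h (Chain.rev h' q')).support.length := by
        have := q'.support_length_pos
        simp [Chain.support]
        omega
      have hcol : (Chain.fwd h (Chain.rev h' q')).ColliderAt 0 :=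
        ⟨(false, true), (true, false), by simp [Chain.marks], by simp [Chain.marks], rfl, rfl⟩
      exact h1 _ _ h (hAnS ((hm 0 x hsup hlen).1 hcol))
  | bid h' q' ih =>
      intro a h hm hb
      rename_i x y z
      have hsup : (Chain.fwd h (Chain.bid h' q')).support[0 + 1]? = some x := by
        simp [Chain.support]
      have hlen : 0 + 2 < (Chain.fwd h (Chain.bid h' q')).support.length := by
        have := q'.support_length_pos
        simp [Chain.support]
        omega
      have hcol : (Chain.fwd h (Chain.bid h' q')).ColliderAt 0 :=
        ⟨(false, true), (true, true), by simp [Chain.marks], by simp [Chain.marks], rfl, rfl⟩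
      exact h1 _ _ h (hAnS ((hm 0 x hsup hlen).1 hcol))

lemma mconn_support_subset {S A : Set V}
    (hAnS : G.Anc S ⊆ A) (h1 : ∀ x y : V, G.dir x y → y ∈ A → x ∈ A)
    {a b : V} (p : G.Chain a b) :
    p.MConnecting S → a ∈ A → b ∈ A → ∀ w ∈ p.support, w ∈ A := by
  induction p with
  | nil a =>
      intro _ ha _ w hw
      simp [Chain.support] at hw
      subst hw; exact ha
  | fwd h q ih =>
      rename_i x y z
      intro hm hx hz w hw
      have hq : q.MConnecting S := mconn_tail (m := (false, true)) (by simp [Chain.support]) (by simp [Chain.marks]) hm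
      have hy : y ∈ A := by
        cases q with
        | nil => exact hz
        | fwd h' q' => exact fwd_head_mem hAnS h1 q' h' hq hz
        | rev h' q' =>
            rename_i d
            have hsup : (Chain.fwd h (Chain.rev h' q')).support[0 + 1]? = some y := by
              simp [Chain.support]
            have hlen : 0 + 2 < (Chain.fwd h (Chain.rev h' q')).support.length := by
              have := q'.support_length_pos
              simp [Chain.support]; omega
            have hcol : (Chain.fwd h (Chain.rev h' q')).ColliderAt 0 :=
              ⟨(false, true), (true, false), by simp [Chain.marks], by simp [Chain.marks], rfl, rfl⟩
            exact hAnS ((hm 0 y hsup hlen).1 hcol)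
        | bid h' q' =>
            rename_i d
            have hsup : (Chain.fwd h (Chain.bid h' q')).support[0 + 1]? = some y := by
              simp [Chain.support]
            have hlen : 0 + 2 < (Chain.fwd h (Chain.bid h' q')).support.length := by
              have := q'.support_length_pos
              simp [Chain.support]; omega
            have hcol : (Chain.fwd h (Chain.bid h' q')).ColliderAt 0 :=
              ⟨(false, true), (true, true), by simp [Chain.marks], by simp [Chain.marks], rfl, rfl⟩
            exact hAnS ((hm 0 y hsup hlen).1 hcol)
      rcases (by simpa [Chain.support] using hw : w = x ∨ w ∈ q.support) with rfl | hw'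
      · exact hx
      · exact ih hq hy hz w hw'
  | rev h q ih =>
      rename_i x y z
      intro hm hx hz w hw
      have hq : q.MConnecting S := mconn_tail (m := (true, false)) (by simp [Chain.support]) (by simp [Chain.marks]) hm
      have hy : y ∈ A := h1 y x h hx
      rcases (by simpa [Chain.support] using hw : w = x ∨ w ∈ q.support) with rfl | hw'
      · exact hx
      · exact ih hq hy hz w hw'
  | bid h q ih =>
      rename_i x y z
      intro hm hx hz w hw
      have hq : q.MConnecting S := mconn_tail (m := (true, true)) (by simp [Chain.support]) (by simp [Chain.marks]) hm
      have hy : y ∈ A := by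
        cases q with
        | nil => exact hz
        | fwd h' q' => exact fwd_head_mem hAnS h1 q' h' hq hz
        | rev h' q' =>
            rename_i d
            have hsup : (Chain.bid h (Chain.rev h' q')).support[0 + 1]? = some y := by
              simp [Chain.support]
            have hlen : 0 + 2 < (Chain.bid h (Chain.rev h' q')).support.length := by
              have := q'.support_length_pos
              simp [Chain.support]; omega
            have hcol : (Chain.bid h (Chain.rev h' q')).ColliderAt 0 :=
              ⟨(true, true), (true, false), by simp [Chain.marks], by simp [Chain.marks], rfl, rfl⟩
            exact hAnS ((hm 0 y hsup hlen).1 hcol)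
        | bid h' q' =>
            rename_i d
            have hsup : (Chain.bid h (Chain.bid h' q')).support[0 + 1]? = some y := by
              simp [Chain.support]
            have hlen : 0 + 2 < (Chain.bid h (Chain.bid h' q')).support.length := by
              have := q'.support_length_pos
              simp [Chain.support]; omega
            have hcol : (Chain.bid h (Chain.bid h' q')).ColliderAt 0 :=
              ⟨(true, true), (true, true), by simp [Chain.marks], by simp [Chain.marks], rfl, rfl⟩
            exact hAnS ((hm 0 y hsup hlen).1 hcol)
      rcases (by simpa [Chain.support] using hw : w = x ∨ w ∈ q.support) with rfl | hw'
      · exact hx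
      · exact ih hq hy hz w hw'

end MVR.MixedGraph

/-- If `u` and `v` are two non-adjacent vertices of an MVR chain graph `G`
and `ρ` is a chain from `u` to `v` whose vertex set is not contained in `An({u, v})`,
then `ρ` is blocked by every subset `S` of `an({u, v})` with `u, v ∉ S`. -/
theorem MVR.blocked_of_not_subset_Anc
    {V : Type} (G : MVR.MixedGraph V) (hG : G.IsMVRChainGraph)
    {u v : V} (hne : u ≠ v) (hnadj : ¬ G.Adjacent u v)
    (p : G.Chain u v) (hp : p.support.Nodup)
    (hρ : ¬ ∀ w ∈ p.support, w ∈ G.Anc {u, v})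
    (S : Set V) (hS : S ⊆ G.anc {u, v}) (huS : u ∉ S) (hvS : v ∉ S) :
    p.Blocked S := by
  intro hm
  apply hρ
  have h1 : ∀ x y : V, G.dir x y → y ∈ G.Anc {u, v} → x ∈ G.Anc {u, v} := by
    rintro x y hxy (⟨t, ht, hyt⟩ | hy)
    · exact Or.inl ⟨t, ht, Relation.TransGen.head hxy hyt⟩
    · exact Or.inl ⟨y, hy, Relation.TransGen.single hxy⟩
  have hAnS : G.Anc S ⊆ G.Anc {u, v} := by
    rintro x (⟨s, hsS, hxs⟩ | hxS)
    · obtain ⟨t, ht, hst⟩ := hS hsS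
      exact Or.inl ⟨t, ht, hxs.trans hst⟩
    · exact Or.inl (hS hxS)
  exact MixedGraph.mconn_support_subset hAnS h1 p hm
    (Or.inr (Set.mem_insert u {v})) (Or.inr (Set.mem_insert_of_mem u rfl))
end

section
/- Let G be an MVR chain graph on V and let C = {C1,…,CH} be a hypergraph on V such that for every chain component τ of G there is a hyperedge C_h with τ ∪ pa_G(τ) ⊆ C_h. Let Ḡ_V be the undirected graph on V whose edge set is the union over h of the edge sets of the complete graphs on the C_h. Then every edge of the augmented graph (G)^a is an edge of Ḡ_V. -/
namespace MVR
namespace MixedGraph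

variable {V : Type} {G : MixedGraph V}

lemma Chain.support_length_eq {a b : V} (p : G.Chain a b) :
    p.support.length = p.marks.length + 1 := by
  induction p <;> simp [Chain.support, Chain.marks, *]

/-- If every edge of a chain has an arrowhead at its left end, and every edge but the
last also has an arrowhead at its right end (i.e. all edges are bidirected except the
last, which is bidirected or points back), then the start is bi-connected to the end,
or to a vertex that the end points to. -/
lemma tail_aux {c b : V} (p : G.Chain c b)
    (H1 : ∀ (j : ℕ) (m : Bool × Bool), p.marks[j]? = some m → m.1 = true)
    (H2 : ∀ (j : ℕ) (m : Bool × Bool), j + 1 < p.marks.length →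
      p.marks[j]? = some m → m.2 = true) :
    G.biGraph.Reachable c b ∨ ∃ d, G.biGraph.Reachable c d ∧ G.dir b d := by
  induction p with
  | nil a => exact Or.inl (SimpleGraph.Reachable.refl a)
  | fwd h q ih =>
      have := H1 0 (false, true) (by simp [Chain.marks])
      simp at this
  | @rev a b' c' h q ih =>
      cases q with
      | nil => exact Or.inr ⟨a, SimpleGraph.Reachable.refl a, h⟩
      | fwd h' q' =>
          have := H2 0 (true, false) (by simp [Chain.marks]) (by simp [Chain.marks])
          simp at this
      | rev h' q' =>
          have := H2 0 (true, false) (by simp [Chain.marks]) (by simp [Chain.marks])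
          simp at this
      | bid h' q' =>
          have := H2 0 (true, false) (by simp [Chain.marks]) (by simp [Chain.marks])
          simp at this
  | @bid a b' c' h q ih =>
      have hab : G.biGraph.Reachable a b' :=
        SimpleGraph.Adj.reachable (by exact h)
      have H1' : ∀ (j : ℕ) (m : Bool × Bool), q.marks[j]? = some m → m.1 = true :=
        fun j m hj => H1 (j + 1) m (by simpa [Chain.marks] using hj)
      have H2' : ∀ (j : ℕ) (m : Bool × Bool), j + 1 < q.marks.length →
          q.marks[j]? = some m → m.2 = true :=
        fun j m hlt hj =>
          H2 (j + 1) m (by simp [Chain.marks]; omega)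
            (by simpa [Chain.marks] using hj)
      rcases ih H1' H2' with hr | ⟨d, hr, hd⟩
      · exact Or.inl (hab.trans hr)
      · exact Or.inr ⟨d, hab.trans hr, hd⟩

lemma mem_union_pa {τ : Set V} {x d : V} (hd : d ∈ τ) (hdir : G.dir x d) :
    x ∈ τ ∪ G.paSet τ := by
  by_cases hx : x ∈ τ
  · exact Or.inl hx
  · exact Or.inr ⟨hx, d, hd, hdir⟩

end MixedGraph
end MVR

/-- Let `C` be a hypergraph on `V` such that every chain component `τ` of
the MVR chain graph `G` together with `pa_G(τ)` is contained in some hyperedge.  Then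
every edge of the augmented graph `(G)ᵃ` (i.e. every pair of distinct collider-connected
vertices) joins two vertices lying in a common hyperedge, hence is an edge of the union
`Ḡ_V` of the complete graphs on the hyperedges. -/
theorem MVR.augmented_edges_subset_hypergraph_union
    {V : Type} {ι : Type} [Fintype ι]
    (G : MVR.MixedGraph V) (hG : G.IsMVRChainGraph)
    (C : ι → Set V) (hCne : ∀ h : ι, (C h).Nonempty)
    (hcov : (⋃ h : ι, C h) = Set.univ)
    (hpar : ∀ τ : Set V, G.IsChainComponent τ → ∃ h : ι, τ ∪ G.paSet τ ⊆ C h)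
    (u v : V) (huv : u ≠ v) (hcc : G.ColliderConnected u v) :
    ∃ h : ι, u ∈ C h ∧ v ∈ C h := by
  classical
  obtain ⟨p, hnd, hcol⟩ := hcc
  -- a helper to finish: given a chain component τ containing/parenting u and v
  have finish : ∀ a : V,
      u ∈ ({w | G.biGraph.Reachable a w} ∪ G.paSet {w | G.biGraph.Reachable a w}) →
      v ∈ ({w | G.biGraph.Reachable a w} ∪ G.paSet {w | G.biGraph.Reachable a w}) →
      ∃ h : ι, u ∈ C h ∧ v ∈ C h := by
    intro a hu hv
    obtain ⟨h, hsub⟩ := hpar {w | G.biGraph.Reachable a w} ⟨a, rfl⟩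
    exact ⟨h, hsub hu, hsub hv⟩
  cases p with
  | nil => exact absurd rfl huv
  | @fwd a w c h q =>
      -- first edge u → w ; all edges of q have arrowhead at left,
      -- all but the last also at right
      have H1 : ∀ (j : ℕ) (m : Bool × Bool), q.marks[j]? = some m → m.1 = true := by
        intro j m hj
        have hlen : j < q.marks.length := by
          by_contra hge
          rw [List.getElem?_eq_none (by omega)] at hj
          exact nomatch hj
        have hc := hcol j (by
          rw [MVR.MixedGraph.Chain.support_length_eq]
          simp [MVR.MixedGraph.Chain.marks]; omega)
        obtain ⟨m₁, m₂, _, hm₂, _, hm₂1⟩ := hc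
        simp only [MVR.MixedGraph.Chain.marks, List.getElem?_cons_succ] at hm₂
        rw [hj] at hm₂
        cases hm₂; exact hm₂1
      have H2 : ∀ (j : ℕ) (m : Bool × Bool), j + 1 < q.marks.length →
          q.marks[j]? = some m → m.2 = true := by
        intro j m hlt hj
        have hc := hcol (j + 1) (by
          rw [MVR.MixedGraph.Chain.support_length_eq]
          simp [MVR.MixedGraph.Chain.marks]; omega)
        obtain ⟨m₁, m₂, hm₁, _, hm₁2, _⟩ := hc
        simp only [MVR.MixedGraph.Chain.marks, List.getElem?_cons_succ] at hm₁
        rw [hj] at hm₁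
        cases hm₁; exact hm₁2
      have hu : u ∈ ({x | G.biGraph.Reachable w x} ∪
          G.paSet {x | G.biGraph.Reachable w x}) :=
        MVR.MixedGraph.mem_union_pa (SimpleGraph.Reachable.refl w) h
      rcases MVR.MixedGraph.tail_aux q H1 H2 with hr | ⟨d, hr, hd⟩
      · exact finish w hu (Or.inl hr)
      · exact finish w hu (MVR.MixedGraph.mem_union_pa hr hd)
  | @rev a w c h q =>
      -- first edge u ← w ; if q is nonempty, the vertex w cannot be a collider
      cases q with
      | nil =>
          exact finish u (Or.inl (SimpleGraph.Reachable.refl u))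
            (MVR.MixedGraph.mem_union_pa (SimpleGraph.Reachable.refl u) h)
      | fwd h' q' =>
          have hc := hcol 0 (by
            rw [MVR.MixedGraph.Chain.support_length_eq]
            simp [MVR.MixedGraph.Chain.marks])
          obtain ⟨m₁, m₂, hm₁, _, hm₁2, _⟩ := hc
          simp [MVR.MixedGraph.Chain.marks] at hm₁
          rw [← hm₁] at hm₁2; simp at hm₁2
      | rev h' q' =>
          have hc := hcol 0 (by
            rw [MVR.MixedGraph.Chain.support_length_eq]
            simp [MVR.MixedGraph.Chain.marks])
          obtain ⟨m₁, m₂, hm₁, _, hm₁2, _⟩ := hc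
          simp [MVR.MixedGraph.Chain.marks] at hm₁
          rw [← hm₁] at hm₁2; simp at hm₁2
      | bid h' q' =>
          have hc := hcol 0 (by
            rw [MVR.MixedGraph.Chain.support_length_eq]
            simp [MVR.MixedGraph.Chain.marks])
          obtain ⟨m₁, m₂, hm₁, _, hm₁2, _⟩ := hc
          simp [MVR.MixedGraph.Chain.marks] at hm₁
          rw [← hm₁] at hm₁2; simp at hm₁2
  | @bid a w c h q =>
      have H1 : ∀ (j : ℕ) (m : Bool × Bool), q.marks[j]? = some m → m.1 = true := by
        intro j m hj
        have hlen : j < q.marks.length := by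
          by_contra hge
          rw [List.getElem?_eq_none (by omega)] at hj
          exact nomatch hj
        have hc := hcol j (by
          rw [MVR.MixedGraph.Chain.support_length_eq]
          simp [MVR.MixedGraph.Chain.marks]; omega)
        obtain ⟨m₁, m₂, _, hm₂, _, hm₂1⟩ := hc
        simp only [MVR.MixedGraph.Chain.marks, List.getElem?_cons_succ] at hm₂
        rw [hj] at hm₂
        cases hm₂; exact hm₂1
      have H2 : ∀ (j : ℕ) (m : Bool × Bool), j + 1 < q.marks.length →
          q.marks[j]? = some m → m.2 = true := by
        intro j m hlt hj
        have hc := hcol (j + 1) (by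
          rw [MVR.MixedGraph.Chain.support_length_eq]
          simp [MVR.MixedGraph.Chain.marks]; omega)
        obtain ⟨m₁, m₂, hm₁, _, hm₁2, _⟩ := hc
        simp only [MVR.MixedGraph.Chain.marks, List.getElem?_cons_succ] at hm₁
        rw [hj] at hm₁
        cases hm₁; exact hm₁2
      have hu : u ∈ ({x | G.biGraph.Reachable w x} ∪
          G.paSet {x | G.biGraph.Reachable w x}) :=
        Or.inl (SimpleGraph.Adj.reachable (G.biGraph.adj_symm (by exact h)))
      rcases MVR.MixedGraph.tail_aux q H1 H2 with hr | ⟨d, hr, hd⟩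
      · exact finish w hu (Or.inl hr)
      · exact finish w hu (MVR.MixedGraph.mem_union_pa hr hd)
end

section
/- Let T be an m-separation tree for an MVR chain graph G = (V, E). If (u, w, v) is a v-structure of G, i.e., u and v are non-adjacent in G, G contains an edge u → w or u ↔ w, and G contains an edge v → w or v ↔ w, then (a) there exists a node of T containing all three of u, v, and w, and (b) w ∉ S for every set S ⊆ V \ {u, v} that m-separates u and v in G. -/
namespace MVR

namespace MixedGraph

variable {V : Type} {G : MixedGraph V}

lemma mconn_nil {a : V} {Z : Set V} : (Chain.nil (G := G) a).MConnecting Z := by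
  intro i x hx hlen
  simp [Chain.support] at hlen

lemma not_msep_self {x : V} {Z : Set V} : ¬ G.MSeparated x x Z := by
  intro h
  exact h (Chain.nil x) (by simp [Chain.support]) mconn_nil

lemma mconn_two {a b : V} {Z : Set V} (p : G.Chain a b) (hs : p.support = [a, b]) :
    p.MConnecting Z := by
  intro i x hx hlen
  rw [hs] at hlen
  simp at hlen

lemma not_msep_adj {a b : V} {Z : Set V} (h : G.Adjacent a b) : ¬ G.MSeparated a b Z := by
  have hab : a ≠ b := by
    rintro rfl
    rcases h with h | h | h
    exacts [G.dir_irrefl _ h, G.dir_irrefl _ h, G.bi_irrefl _ h]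
  intro hsep
  rcases h with h | h | h
  · exact hsep (Chain.fwd h (Chain.nil b)) (by simp [Chain.support, hab])
      (mconn_two _ (by simp [Chain.support]))
  · exact hsep (Chain.rev h (Chain.nil b)) (by simp [Chain.support, hab])
      (mconn_two _ (by simp [Chain.support]))
  · exact hsep (Chain.bid h (Chain.nil b)) (by simp [Chain.support, hab])
      (mconn_two _ (by simp [Chain.support]))

lemma mconn_three {u v w : V} {Z : Set V} (p : G.Chain u v) (hs : p.support = [u, w, v])
    (hc : p.ColliderAt 0) (hwZ : w ∈ Z) : p.MConnecting Z := by
  intro i x hx hlen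
  rw [hs] at hx hlen
  simp at hlen
  have hi : i = 0 := by omega
  subst hi
  simp at hx
  subst hx
  exact ⟨fun _ => Set.mem_union_right _ hwZ, fun hnc => absurd hc hnc⟩

lemma not_msep_vchain {u v w : V} {Z : Set V}
    (huw : G.dir u w ∨ G.bi u w) (hvw : G.dir v w ∨ G.bi v w)
    (huv : u ≠ v) (hwZ : w ∈ Z) : ¬ G.MSeparated u v Z := by
  have huw' : u ≠ w := by
    rintro rfl
    rcases huw with h | h
    exacts [G.dir_irrefl _ h, G.bi_irrefl _ h]
  have hvw' : v ≠ w := by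
    rintro rfl
    rcases hvw with h | h
    exacts [G.dir_irrefl _ h, G.bi_irrefl _ h]
  intro hsep
  have hnd : ([u, w, v] : List V).Nodup := by
    simp [huv, huw', (Ne.symm hvw' : w ≠ v)]
  rcases huw with h1 | h1 <;> rcases hvw with h2 | h2
  · exact hsep (Chain.fwd h1 (Chain.rev h2 (Chain.nil v)))
      (by simpa [Chain.support] using hnd)
      (mconn_three _ (by simp [Chain.support])
        ⟨(false, true), (true, false), rfl, rfl, rfl, rfl⟩ hwZ)
  · exact hsep (Chain.fwd h1 (Chain.bid (G.bi_symm h2) (Chain.nil v)))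
      (by simpa [Chain.support] using hnd)
      (mconn_three _ (by simp [Chain.support])
        ⟨(false, true), (true, true), rfl, rfl, rfl, rfl⟩ hwZ)
  · exact hsep (Chain.bid h1 (Chain.rev h2 (Chain.nil v)))
      (by simpa [Chain.support] using hnd)
      (mconn_three _ (by simp [Chain.support])
        ⟨(true, true), (true, false), rfl, rfl, rfl, rfl⟩ hwZ)
  · exact hsep (Chain.bid h1 (Chain.bid (G.bi_symm h2) (Chain.nil v)))
      (by simpa [Chain.support] using hnd)
      (mconn_three _ (by simp [Chain.support])
        ⟨(true, true), (true, true), rfl, rfl, rfl, rfl⟩ hwZ)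

section Tree

variable {ι : Type} {T : SimpleGraph ι} {C : ι → Set V}

lemma reach_del {i i' j : ι} (q : T.Walk i' j) (hi : i ∉ q.support) :
    (T.deleteEdges {s(i, i')}).Reachable i' j := by
  refine ⟨q.toDeleteEdges _ fun e he => ?_⟩
  rintro rfl
  exact hi (q.fst_mem_support_of_mem_edges he)

lemma mem_node_of_mem (hT : G.IsMSepTree T C) (x : V) : ∃ i, x ∈ C i := by
  have hx : x ∈ (⋃ i, C i) := by rw [hT.2.1]; trivial
  simpa using hx

lemma shared_aux (hT : G.IsMSepTree T C) {x y : V} (hadj : G.Adjacent x y)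
    {i j : ι} (q : T.Walk i j) :
    q.IsPath → x ∈ C i → y ∈ C j → ∃ k, x ∈ C k ∧ y ∈ C k := by
  induction q with
  | nil => exact fun _ hxi hyj => ⟨_, hxi, hyj⟩
  | @cons i i' j h q ih =>
    intro hp hxi hyj
    rw [SimpleGraph.Walk.cons_isPath_iff] at hp
    by_cases hx' : x ∈ C i'
    · exact ih hp.1 hx' hyj
    · have hreach : (T.deleteEdges {s(i, i')}).Reachable i' j := reach_del q hp.2
      by_cases hyS : y ∈ C i ∩ C i'
      · exact ⟨i, hxi, hyS.1⟩
      · have hxX : x ∈ (⋃ k ∈ {k : ι | (T.deleteEdges {s(i, i')}).Reachable i k}, C k)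
            \ (C i ∩ C i') :=
          ⟨Set.mem_iUnion₂.2 ⟨i, SimpleGraph.Reachable.refl i, hxi⟩, fun hs => hx' hs.2⟩
        have hyY : y ∈ (⋃ k ∈ {k : ι | (T.deleteEdges {s(i, i')}).Reachable i' k}, C k)
            \ (C i ∩ C i') :=
          ⟨Set.mem_iUnion₂.2 ⟨j, hreach, hyj⟩, hyS⟩
        exact absurd (hT.2.2 i i' h x hxX y hyY) (not_msep_adj hadj)

lemma shared_node_of_adjacent (hT : G.IsMSepTree T C) {x y : V} (hadj : G.Adjacent x y) :
    ∃ k, x ∈ C k ∧ y ∈ C k := by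
  classical
  obtain ⟨i, hxi⟩ := mem_node_of_mem hT x
  obtain ⟨j, hyj⟩ := mem_node_of_mem hT y
  obtain ⟨p⟩ := hT.1.isConnected.preconnected i j
  exact shared_aux hT hadj p.bypass p.bypass_isPath hxi hyj

lemma triple_aux (hT : G.IsMSepTree T C) {u v w : V}
    (huw : G.dir u w ∨ G.bi u w) (hvw : G.dir v w ∨ G.bi v w) (huv : u ≠ v)
    {i j : ι} (q : T.Walk i j) :
    q.IsPath → u ∈ C i → w ∈ C i → v ∈ C j → w ∈ C j →
      ∃ k, u ∈ C k ∧ v ∈ C k ∧ w ∈ C k := by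
  induction q with
  | nil => exact fun _ hui hwi hvj _ => ⟨_, hui, hvj, hwi⟩
  | @cons i i' j h q ih =>
    intro hp hui hwi hvj hwj
    rw [SimpleGraph.Walk.cons_isPath_iff] at hp
    have hreach : (T.deleteEdges {s(i, i')}).Reachable i' j := reach_del q hp.2
    by_cases hw' : w ∈ C i'
    · by_cases hu' : u ∈ C i'
      · exact ih hp.1 hu' hw' hvj hwj
      · -- edge (i, i'): u not in separator, w in separator
        by_cases hvS : v ∈ C i ∩ C i'
        · exact ⟨i, hui, hvS.1, hwi⟩
        · have huX : u ∈ (⋃ k ∈ {k : ι | (T.deleteEdges {s(i, i')}).Reachable i k}, C k)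
              \ (C i ∩ C i') :=
            ⟨Set.mem_iUnion₂.2 ⟨i, SimpleGraph.Reachable.refl i, hui⟩, fun hs => hu' hs.2⟩
          have hvY : v ∈ (⋃ k ∈ {k : ι | (T.deleteEdges {s(i, i')}).Reachable i' k}, C k)
              \ (C i ∩ C i') :=
            ⟨Set.mem_iUnion₂.2 ⟨j, hreach, hvj⟩, hvS⟩
          exact absurd (hT.2.2 i i' h u huX v hvY)
            (not_msep_vchain huw hvw huv ⟨hwi, hw'⟩)
    · -- w is on both sides but not in the separator: contradiction
      have hwX : w ∈ (⋃ k ∈ {k : ι | (T.deleteEdges {s(i, i')}).Reachable i k}, C k)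
          \ (C i ∩ C i') :=
        ⟨Set.mem_iUnion₂.2 ⟨i, SimpleGraph.Reachable.refl i, hwi⟩, fun hs => hw' hs.2⟩
      have hwY : w ∈ (⋃ k ∈ {k : ι | (T.deleteEdges {s(i, i')}).Reachable i' k}, C k)
          \ (C i ∩ C i') :=
        ⟨Set.mem_iUnion₂.2 ⟨j, hreach, hwj⟩, fun hs => hw' hs.2⟩
      exact absurd (hT.2.2 i i' h w hwX w hwY) not_msep_self

end Tree

end MixedGraph

end MVR

/-- Let `T` be an m-separation tree for an MVR chain graph `G` and let
`(u, w, v)` be a v-structure of `G` (`u`, `v` non-adjacent, `u → w` or `u ↔ w`, and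
`v → w` or `v ↔ w`).  Then (a) some node of `T` contains `u`, `v` and `w`, and (b)
`w ∉ S` for every `S ⊆ V \ {u, v}` that m-separates `u` and `v` in `G`. -/
theorem MVR.vStructure_node_and_separator
    {V : Type} {ι : Type}
    (G : MVR.MixedGraph V) (hG : G.IsMVRChainGraph)
    (T : SimpleGraph ι) (C : ι → Set V) (hT : G.IsMSepTree T C)
    (u v w : V) (huv : u ≠ v) (hnadj : ¬ G.Adjacent u v)
    (huw : G.dir u w ∨ G.bi u w) (hvw : G.dir v w ∨ G.bi v w) :
    (∃ i : ι, u ∈ C i ∧ v ∈ C i ∧ w ∈ C i) ∧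
      (∀ S : Set V, S ⊆ Set.univ \ {u, v} → G.MSeparated u v S → w ∉ S) := by
  constructor
  · have hadj_uw : G.Adjacent u w := by
      rcases huw with h | h
      exacts [Or.inl h, Or.inr (Or.inr h)]
    have hadj_vw : G.Adjacent v w := by
      rcases hvw with h | h
      exacts [Or.inl h, Or.inr (Or.inr h)]
    obtain ⟨i0, hui, hwi⟩ := MVR.MixedGraph.shared_node_of_adjacent hT hadj_uw
    obtain ⟨j0, hvj, hwj⟩ := MVR.MixedGraph.shared_node_of_adjacent hT hadj_vw
    classical
    obtain ⟨p⟩ := hT.1.isConnected.preconnected i0 j0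
    exact MVR.MixedGraph.triple_aux hT huw hvw huv p.bypass p.bypass_isPath hui hwi hvj hwj
  · intro S _ hsep hwS
    exact MVR.MixedGraph.not_msep_vchain huw hvw huv hwS hsep
end

section
/- Let u and v be vertices of an MVR chain graph G and let ρ be a chain from u to v whose vertex set is not contained in An({u, v}). Then ρ contains a collider whose middle vertex w satisfies w ∉ an({u, v}) and, moreover, no vertex of which w is an ancestor lies in an({u, v}). -/
namespace MVR
namespace MixedGraph

variable {V : Type} {G : MixedGraph V}

lemma Chain.support_length_eq_marks {a c : V} (q : G.Chain a c) :
    q.support.length = q.marks.length + 1 := by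
  induction q <;> simp [Chain.support, Chain.marks, *]

lemma Chain.support_zero {a c : V} (q : G.Chain a c) :
    q.support[0]? = some a := by
  cases q <;> simp [Chain.support]

/-- Rightward search: from a vertex outside `S`, either there is a collider strictly
inside the chain with middle vertex outside `S`, or the first edge has an arrowhead
at the left endpoint. -/
lemma chainR {S : Set V}
    (hS : ∀ {x y : V}, G.dir x y → y ∈ S → x ∈ S)
    {x c : V} (q : G.Chain x c) :
    c ∈ S → x ∉ S →
      (∃ i w, q.support[i + 1]? = some w ∧ i + 2 < q.support.length ∧
          q.ColliderAt i ∧ w ∉ S) ∨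
      (∃ m : Bool × Bool, q.marks[0]? = some m ∧ m.1 = true) := by
  induction q with
  | nil a => exact fun hc hx => absurd hc hx
  | @fwd a b c h q ih =>
    intro hc hx
    have hb : b ∉ S := fun hbS => hx (hS h hbS)
    rcases ih hc hb with ⟨i, w, hw, hlen, hcol, hwS⟩ | ⟨m, hm0, hm1⟩
    · left
      refine ⟨i + 1, w, ?_, ?_, ?_, hwS⟩
      · simpa [Chain.support] using hw
      · simp only [Chain.support, List.length_cons]; omega
      · obtain ⟨m₁, m₂, h1, h2, h3, h4⟩ := hcol
        exact ⟨m₁, m₂, by simpa [Chain.marks] using h1,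
          by simpa [Chain.marks] using h2, h3, h4⟩
    · left
      refine ⟨0, b, ?_, ?_, ?_, hb⟩
      · simpa [Chain.support] using q.support_zero
      · have : 1 ≤ q.marks.length := by
          by_contra hlt
          have : q.marks = [] := List.eq_nil_of_length_eq_zero (by omega)
          simp [this] at hm0
        have := q.support_length_eq_marks
        simp only [Chain.support, List.length_cons]
        omega
      · exact ⟨(false, true), m, by simp [Chain.marks],
          by simpa [Chain.marks] using hm0, rfl, hm1⟩
  | @rev a b c h q ih =>
    intro _ _
    exact Or.inr ⟨(true, false), by simp [Chain.marks], rfl⟩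
  | @bid a b c h q ih =>
    intro _ _
    exact Or.inr ⟨(true, true), by simp [Chain.marks], rfl⟩

/-- Main chain lemma: if both endpoints are in a `dir`-upward-closed set `S` but some
support vertex is not, then there is a collider with middle vertex outside `S`. -/
lemma chainM {S : Set V}
    (hS : ∀ {x y : V}, G.dir x y → y ∈ S → x ∈ S)
    {a c : V} (q : G.Chain a c) :
    c ∈ S → a ∈ S → ¬ (∀ w ∈ q.support, w ∈ S) →
      ∃ i w, q.support[i + 1]? = some w ∧ i + 2 < q.support.length ∧
        q.ColliderAt i ∧ w ∉ S := by
  induction q with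
  | nil a =>
    intro _ ha hbad
    exact absurd (by simpa [Chain.support] using ha) hbad
  | @fwd a b c h q ih =>
    intro hc ha hbad
    by_cases hb : b ∈ S
    · have hbad' : ¬ (∀ w ∈ q.support, w ∈ S) := by
        intro hall
        apply hbad
        intro w hw
        simp only [Chain.support, List.mem_cons] at hw
        rcases hw with rfl | hw
        · exact ha
        · exact hall w hw
      obtain ⟨i, w, hw, hlen, hcol, hwS⟩ := ih hc hb hbad'
      refine ⟨i + 1, w, by simpa [Chain.support] using hw,
        by simp only [Chain.support, List.length_cons]; omega, ?_, hwS⟩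
      obtain ⟨m₁, m₂, h1, h2, h3, h4⟩ := hcol
      exact ⟨m₁, m₂, by simpa [Chain.marks] using h1,
        by simpa [Chain.marks] using h2, h3, h4⟩
    · rcases chainR hS q hc hb with ⟨i, w, hw, hlen, hcol, hwS⟩ | ⟨m, hm0, hm1⟩
      · refine ⟨i + 1, w, by simpa [Chain.support] using hw,
          by simp only [Chain.support, List.length_cons]; omega, ?_, hwS⟩
        obtain ⟨m₁, m₂, h1, h2, h3, h4⟩ := hcol
        exact ⟨m₁, m₂, by simpa [Chain.marks] using h1,
          by simpa [Chain.marks] using h2, h3, h4⟩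
      · refine ⟨0, b, by simpa [Chain.support] using q.support_zero, ?_, ?_, hb⟩
        · have : 1 ≤ q.marks.length := by
            by_contra hlt
            have : q.marks = [] := List.eq_nil_of_length_eq_zero (by omega)
            simp [this] at hm0
          have := q.support_length_eq_marks
          simp only [Chain.support, List.length_cons]
          omega
        · exact ⟨(false, true), m, by simp [Chain.marks],
            by simpa [Chain.marks] using hm0, rfl, hm1⟩
  | @rev a b c h q ih =>
    intro hc ha hbad
    have hb : b ∈ S := hS h ha
    have hbad' : ¬ (∀ w ∈ q.support, w ∈ S) := by
      intro hall
      apply hbad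
      intro w hw
      simp only [Chain.support, List.mem_cons] at hw
      rcases hw with rfl | hw
      · exact ha
      · exact hall w hw
    obtain ⟨i, w, hw, hlen, hcol, hwS⟩ := ih hc hb hbad'
    refine ⟨i + 1, w, by simpa [Chain.support] using hw,
      by simp only [Chain.support, List.length_cons]; omega, ?_, hwS⟩
    obtain ⟨m₁, m₂, h1, h2, h3, h4⟩ := hcol
    exact ⟨m₁, m₂, by simpa [Chain.marks] using h1,
      by simpa [Chain.marks] using h2, h3, h4⟩
  | @bid a b c h q ih =>
    intro hc ha hbad
    by_cases hb : b ∈ S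
    · have hbad' : ¬ (∀ w ∈ q.support, w ∈ S) := by
        intro hall
        apply hbad
        intro w hw
        simp only [Chain.support, List.mem_cons] at hw
        rcases hw with rfl | hw
        · exact ha
        · exact hall w hw
      obtain ⟨i, w, hw, hlen, hcol, hwS⟩ := ih hc hb hbad'
      refine ⟨i + 1, w, by simpa [Chain.support] using hw,
        by simp only [Chain.support, List.length_cons]; omega, ?_, hwS⟩
      obtain ⟨m₁, m₂, h1, h2, h3, h4⟩ := hcol
      exact ⟨m₁, m₂, by simpa [Chain.marks] using h1,
        by simpa [Chain.marks] using h2, h3, h4⟩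
    · rcases chainR hS q hc hb with ⟨i, w, hw, hlen, hcol, hwS⟩ | ⟨m, hm0, hm1⟩
      · refine ⟨i + 1, w, by simpa [Chain.support] using hw,
          by simp only [Chain.support, List.length_cons]; omega, ?_, hwS⟩
        obtain ⟨m₁, m₂, h1, h2, h3, h4⟩ := hcol
        exact ⟨m₁, m₂, by simpa [Chain.marks] using h1,
          by simpa [Chain.marks] using h2, h3, h4⟩
      · refine ⟨0, b, by simpa [Chain.support] using q.support_zero, ?_, ?_, hb⟩
        · have : 1 ≤ q.marks.length := by
            by_contra hlt
            have : q.marks = [] := List.eq_nil_of_length_eq_zero (by omega)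
            simp [this] at hm0
          have := q.support_length_eq_marks
          simp only [Chain.support, List.length_cons]
          omega
        · exact ⟨(true, true), m, by simp [Chain.marks],
            by simpa [Chain.marks] using hm0, rfl, hm1⟩

end MixedGraph
end MVR

/-- If `ρ` is a chain from `u` to `v` in an MVR chain graph whose vertex
set is not contained in `An({u, v})`, then `ρ` contains a collider whose middle vertex
`w` satisfies `w ∉ an({u, v})` and no vertex of which `w` is an ancestor lies in
`an({u, v})`. -/
theorem MVR.exists_collider_outside_anc
    {V : Type} (G : MVR.MixedGraph V) (hG : G.IsMVRChainGraph)
    (u v : V) (p : G.Chain u v) (hp : p.support.Nodup)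
    (hρ : ¬ ∀ w ∈ p.support, w ∈ G.Anc {u, v}) :
    ∃ (i : ℕ) (w : V), p.support[i + 1]? = some w ∧ i + 2 < p.support.length ∧
      p.ColliderAt i ∧ w ∉ G.anc {u, v} ∧
      ∀ x : V, G.IsAncestor w x → x ∉ G.anc {u, v} := by
    classical
  set S : Set V := G.Anc {u, v} with hSdef
  have hS : ∀ {x y : V}, G.dir x y → y ∈ S → x ∈ S := by
    intro x y hxy hy
    rcases hy with hy | hy
    · rcases hy with ⟨z, hz, hyz⟩
      exact Or.inl ⟨z, hz, Relation.TransGen.head hxy hyz⟩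
    · exact Or.inl ⟨y, hy, Relation.TransGen.single hxy⟩
  have hu : u ∈ S := Or.inr (by simp)
  have hv : v ∈ S := Or.inr (by simp)
  obtain ⟨i, w, hw, hlen, hcol, hwS⟩ := MVR.MixedGraph.chainM hS p hv hu hρ
  have hwanc : w ∉ G.anc {u, v} := fun h => hwS (Or.inl h)
  refine ⟨i, w, hw, hlen, hcol, hwanc, ?_⟩
  intro x hwx hx
  rcases hx with ⟨z, hz, hxz⟩
  exact hwanc ⟨z, hz, hwx.trans hxz⟩
end
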